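/- arXiv:2409.01285 — 12 statements merged into one kernel-verified Lean document; each statement's English description precedes it below -/
import Mathlib

section
/- Let d ≥ 1, m ≥ 3, s = 2d+3, a ∈ {1,2}, and suppose ℓ = k·s + (−1)^a·2·d·m for some integer k. Then for this ℓ, d ≤ (|d·(m−1) − (d+a)·ℓ| mod s) ≤ d+3; in fact (|d·(m−1) − (d+a)·ℓ| mod s) equals d or d+3. -/
theorem stmt_7 (d m s ℓ k : ℤ) (a : ℕ) (hd : 1 ≤ d) (hm : 3 ≤ m)
    (hs : s = 2 * d + 3) (ha : a = 1 ∨ a = 2)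
    (hl : ℓ = k * s + (-1) ^ a * 2 * d * m) :
    (d ≤ |d * (m - 1) - (d + a) * ℓ| % s ∧ |d * (m - 1) - (d + a) * ℓ| % s ≤ d + 3) ∧
      (|d * (m - 1) - (d + a) * ℓ| % s = d ∨ |d * (m - 1) - (d + a) * ℓ| % s = d + 3) := by
  set X := d * (m - 1) - (d + (a : ℤ)) * ℓ with hX
  obtain ⟨c, hc⟩ : ∃ c, X + d = s * c := by
    rcases ha with h | h <;> subst h
    · exact ⟨d * m - (d + 1) * k, by rw [hX, hl, hs]; push_cast; ring⟩
    · exact ⟨-(d * m) - (d + 2) * k, by rw [hX, hl, hs]; push_cast; ring⟩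
  have h1 : X % s = d + 3 := by
    have : X = (d + 3) + s * (c - 1) := by rw [hs] at hc ⊢; linarith
    rw [this, Int.add_mul_emod_self_left, Int.emod_eq_of_lt (by omega) (by omega)]
  have h2 : (-X) % s = d := by
    have : -X = d + s * (-c) := by linarith
    rw [this, Int.add_mul_emod_self_left, Int.emod_eq_of_lt (by omega) (by omega)]
  rcases abs_cases X with ⟨hax, _⟩ | ⟨hax, _⟩ <;> rw [hax]
  · rw [h1]; omega
  · rw [h2]; omega
end

section
/- Let t ≥ 0, d = 3t+2, s = 2d+3 = 6t+7, m ≥ 3, a ∈ {1,2}, and suppose ℓ = k·s − (2t+3)·(d+a)·m for some integer k. Then (|(d+a)·(m−1) − d·ℓ| mod s) ∈ {d+1, d+2}; in particular d ≤ (|(d+a)·(m−1) − d·ℓ| mod s) ≤ d+3. -/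
theorem stmt_8 (t d s m ℓ k : ℤ) (a : ℕ) (ht : 0 ≤ t) (hd : d = 3 * t + 2)
    (hs : s = 2 * d + 3) (hm : 3 ≤ m) (ha : a = 1 ∨ a = 2)
    (hl : ℓ = k * s - (2 * t + 3) * (d + a) * m) :
    |(d + a) * (m - 1) - d * ℓ| % s ∈ ({d + 1, d + 2} : Set ℤ) ∧
      d ≤ |(d + a) * (m - 1) - d * ℓ| % s ∧ |(d + a) * (m - 1) - d * ℓ| % s ≤ d + 3 := by
  have hacases : (a : ℤ) = 1 ∨ (a : ℤ) = 2 := by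
    rcases ha with h | h <;> [left; right] <;> exact_mod_cast congrArg (Nat.cast : ℕ → ℤ) h
  set X : ℤ := (d + a) * (m - 1) - d * ℓ with hX
  have key : X = -(d + (a:ℤ)) + s * ((d + a) * m * (t + 1) - d * k) := by
    subst hl hs hd; ring
  have hval : |X| % s = s - (d + a) ∨ |X| % s = d + a := by
    rcases abs_cases X with ⟨h1, _⟩ | ⟨h1, _⟩
    · left
      rw [h1, key, Int.add_mul_emod_self_left]
      rw [show (-(d + (a:ℤ))) = (s - (d + a)) + s * (-1) by ring,
        Int.add_mul_emod_self_left, Int.emod_eq_of_lt (by omega) (by omega)]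
    · right
      have : -X = (d + (a:ℤ)) + s * (-((d + a) * m * (t + 1) - d * k)) := by
        rw [key]; ring
      rw [h1, this, Int.add_mul_emod_self_left, Int.emod_eq_of_lt (by omega) (by omega)]
  refine ⟨?_, ?_, ?_⟩
  · simp only [Set.mem_insert_iff, Set.mem_singleton_iff]
    omega
  · omega
  · omega
end

section
/- Let t ≥ 1, d = 3t, s = 6t+3, and suppose m = p·s + 3t' for some integers p ≥ 0 and t' with 0 ≤ t' ≤ 2t and m ≥ 3. Let a ∈ {1,2}, i ∈ {0,1,2}, and ℓ = k·s + (i+a−1)·(s/3) − (−1)^a·t' for some integer k. Then (|(d+a)·(m−1) − d·ℓ| mod s) ∈ {d+1, d+2}. -/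
lemma aux_emod (s r q x : ℤ) (h : x = r + s * q) (h0 : 0 ≤ r) (h1 : r < s) :
    x % s = r := by
  subst h
  rw [Int.add_mul_emod_self_left, Int.emod_eq_of_lt h0 h1]

theorem stmt_10 (t d s m p t' ℓ k i : ℤ) (a : ℕ) (ht : 1 ≤ t) (hd : d = 3 * t)
    (hs : s = 6 * t + 3) (hp : 0 ≤ p) (ht' : 0 ≤ t' ∧ t' ≤ 2 * t)
    (hm : m = p * s + 3 * t') (hm3 : 3 ≤ m)
    (ha : a = 1 ∨ a = 2) (hi : i = 0 ∨ i = 1 ∨ i = 2)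
    (hl : ℓ = k * s + (i + a - 1) * (s / 3) - (-1) ^ a * t') :
    |(d + a) * (m - 1) - d * ℓ| % s ∈ ({d + 1, d + 2} : Set ℤ) := by
  obtain ⟨ht0, ht1⟩ := ht'
  have h3 : s / 3 = 2 * t + 1 := by omega
  rw [h3] at hl
  rcases ha with ha | ha <;> subst ha <;> subst hd hs hm hl <;> push_cast <;>
    simp only [Set.mem_insert_iff, Set.mem_singleton_iff]
  · have key : (3 * t + 1) * (p * (6 * t + 3) + 3 * t' - 1) -
        3 * t * (k * (6 * t + 3) + (i + 1 - 1) * (2 * t + 1) - -1 * t')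
        = (3 * t + 2) + (6 * t + 3) * ((3 * t + 1) * p - 3 * t * k + t' - t * i - 1) := by
      ring
    rcases abs_choice ((3 * t + 1) * (p * (6 * t + 3) + 3 * t' - 1) -
        3 * t * (k * (6 * t + 3) + (i + 1 - 1) * (2 * t + 1) - -1 * t')) with h | h <;>
      rw [h]
    · right
      rw [aux_emod _ (3 * t + 2) _ _ key (by omega) (by omega)]
    · left
      have key2 : -((3 * t + 1) * (p * (6 * t + 3) + 3 * t' - 1) -
          3 * t * (k * (6 * t + 3) + (i + 1 - 1) * (2 * t + 1) - -1 * t'))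
          = (3 * t + 1) + (6 * t + 3) * (-((3 * t + 1) * p - 3 * t * k + t' - t * i - 1) - 1) := by
        ring
      rw [aux_emod _ (3 * t + 1) _ _ key2 (by omega) (by omega)]
  · have key : (3 * t + 2) * (p * (6 * t + 3) + 3 * t' - 1) -
        3 * t * (k * (6 * t + 3) + (i + 2 - 1) * (2 * t + 1) - 1 * t')
        = (3 * t + 1) + (6 * t + 3) * ((3 * t + 2) * p - 3 * t * k + 2 * t' - t * i - t - 1) := by
      ring
    rcases abs_choice ((3 * t + 2) * (p * (6 * t + 3) + 3 * t' - 1) -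
        3 * t * (k * (6 * t + 3) + (i + 2 - 1) * (2 * t + 1) - 1 * t')) with h | h <;>
      rw [h]
    · left
      rw [aux_emod _ (3 * t + 1) _ _ key (by omega) (by omega)]
    · right
      have key2 : -((3 * t + 2) * (p * (6 * t + 3) + 3 * t' - 1) -
          3 * t * (k * (6 * t + 3) + (i + 2 - 1) * (2 * t + 1) - 1 * t'))
          = (3 * t + 2) + (6 * t + 3) * (-((3 * t + 2) * p - 3 * t * k + 2 * t' - t * i - t - 1) - 1) := by
        ring
      rw [aux_emod _ (3 * t + 2) _ _ key2 (by omega) (by omega)]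
end

section
/- Let d ≥ 1, m ≥ 3, s = 2d+3, a ∈ {1,2}, and suppose ℓ = k·s + (−1)^a·2·m for some integer k, and j' ∈ {−1, 1}. Then d ≤ (|m − 1 − (d+a)·(j'+ℓ)| mod s) ≤ d+3. -/
lemma key_mod (s X r q : ℤ) (h : X = s * q + r) (h0 : 0 ≤ r) (h1 : r < s) :
    X % s = r := by
  have : X = r + s * q := by linarith
  rw [this, Int.add_mul_emod_self_left, Int.emod_eq_of_lt h0 h1]

lemma key_abs (s X r q : ℤ) (h : X = s * q + r) (h0 : 0 < r) (h1 : r < s) :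
    |X| % s = r ∨ |X| % s = s - r := by
  rcases abs_cases X with ⟨he, _⟩ | ⟨he, _⟩
  · left; rw [he]; exact key_mod s X r q h h0.le h1
  · right; rw [he]
    exact key_mod s (-X) (s - r) (-q - 1) (by rw [h]; ring) (by linarith) (by linarith)

theorem stmt_11 (d m s ℓ k j' : ℤ) (a : ℕ) (hd : 1 ≤ d) (hm : 3 ≤ m)
    (hs : s = 2 * d + 3) (ha : a = 1 ∨ a = 2)
    (hl : ℓ = k * s + (-1) ^ a * 2 * m) (hj : j' = -1 ∨ j' = 1) :
    d ≤ |m - 1 - (d + a) * (j' + ℓ)| % s ∧ |m - 1 - (d + a) * (j' + ℓ)| % s ≤ d + 3 := by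
  subst hs hl
  rcases ha with rfl | rfl <;> rcases hj with rfl | rfl <;> push_cast
  · rcases key_abs (2 * d + 3) (m - 1 - (d + 1) * (-1 + (k * (2 * d + 3) + -2 * m)))
      d (m - (d + 1) * k) (by ring) (by linarith) (by linarith) with h | h <;>
      rw [h] <;> omega
  · rcases key_abs (2 * d + 3) (m - 1 - (d + 1) * (1 + (k * (2 * d + 3) + -2 * m)))
      (d + 1) (m - 1 - (d + 1) * k) (by ring) (by linarith) (by linarith) with h | h <;>
      rw [h] <;> omega
  · rcases key_abs (2 * d + 3) (m - 1 - (d + 2) * (-1 + (k * (2 * d + 3) + 2 * m)))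
      (d + 1) (-m - (d + 2) * k) (by ring) (by linarith) (by linarith) with h | h <;>
      rw [h] <;> omega
  · rcases key_abs (2 * d + 3) (m - 1 - (d + 2) * (1 + (k * (2 * d + 3) + 2 * m)))
      d (-m - 1 - (d + 2) * k) (by ring) (by linarith) (by linarith) with h | h <;>
      rw [h] <;> omega
end

section
/- Let d ≥ 1, m ≥ 3, s = 2d+3, a ∈ {1,2}, and suppose ℓ = k·s − (−1)^a·(d+1)·m for some integer k, and j' ∈ {−1, 1}. Then d ≤ (|(d+a)·(m−1) − (j'+ℓ)| mod s) ≤ d+3. -/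
theorem stmt_12 (d m s ℓ k j' : ℤ) (a : ℕ) (hd : 1 ≤ d) (hm : 3 ≤ m)
    (hs : s = 2 * d + 3) (ha : a = 1 ∨ a = 2)
    (hl : ℓ = k * s - (-1) ^ a * (d + 1) * m) (hj : j' = -1 ∨ j' = 1) :
    d ≤ |(d + a) * (m - 1) - (j' + ℓ)| % s ∧ |(d + a) * (m - 1) - (j' + ℓ)| % s ≤ d + 3 := by
  have hkey : ∀ x c : ℤ, s ∣ x - c → 0 ≤ c → c < s → x % s = c := by
    rintro x c ⟨w, hw⟩ h0 h1
    have hx : x = c + s * w := by linarith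
    rw [hx, Int.add_mul_emod_self_left, Int.emod_eq_of_lt h0 h1]
  have habs := abs_choice ((d + (a : ℤ)) * (m - 1) - (j' + ℓ))
  rcases ha with rfl | rfl <;> rcases hj with rfl | rfl <;>
      rcases habs with h | h <;> rw [h] <;> subst hs <;> subst hl
  · rw [hkey _ (d + 3) ⟨-(k + 1), by push_cast; ring⟩ (by linarith) (by linarith)]; omega
  · rw [hkey _ d ⟨k, by push_cast; ring⟩ (by linarith) (by linarith)]; omega
  · rw [hkey _ (d + 1) ⟨-(k + 1), by push_cast; ring⟩ (by linarith) (by linarith)]; omega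
  · rw [hkey _ (d + 2) ⟨k, by push_cast; ring⟩ (by linarith) (by linarith)]; omega
  · rw [hkey _ (d + 2) ⟨m - k - 1, by push_cast; ring⟩ (by linarith) (by linarith)]; omega
  · rw [hkey _ (d + 1) ⟨k - m, by push_cast; ring⟩ (by linarith) (by linarith)]; omega
  · rw [hkey _ d ⟨m - k - 1, by push_cast; ring⟩ (by linarith) (by linarith)]; omega
  · rw [hkey _ (d + 3) ⟨k - m, by push_cast; ring⟩ (by linarith) (by linarith)]; omega
end

section
/- Let d ≥ 1, m ≥ 3, s = 2d+3, a ∈ {1,2}, and suppose ℓ = k·s + (−1)^a·2·m for some integer k, and j' ∈ {−2, 0, 2}. Then 1 ≤ (|m − 2 − (d+a)·(j'+ℓ)| mod s) ≤ 2d+2. -/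
lemma key_13 (s x r t b : ℤ) (h : x = r + t * s) (h1 : 0 < r) (h2 : r < s)
    (h3 : s ≤ b + 1) : 1 ≤ |x| % s ∧ |x| % s ≤ b := by
  have hs : 0 < s := lt_trans h1 h2
  have hnd : ¬ s ∣ x := by
    rintro ⟨c, hc⟩
    have hdr : s ∣ r := ⟨c - t, by linarith [hc, h]⟩
    have := Int.le_of_dvd h1 hdr
    omega
  have h0 : |x| % s ≠ 0 := fun h0 =>
    hnd ((dvd_abs s x).mp (Int.dvd_of_emod_eq_zero h0))
  have := Int.emod_nonneg |x| hs.ne'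
  have := Int.emod_lt_of_pos |x| hs
  omega

theorem stmt_13 (d m s ℓ k j' : ℤ) (a : ℕ) (hd : 1 ≤ d) (hm : 3 ≤ m)
    (hs : s = 2 * d + 3) (ha : a = 1 ∨ a = 2)
    (hl : ℓ = k * s + (-1) ^ a * 2 * m) (hj : j' = -2 ∨ j' = 0 ∨ j' = 2) :
    1 ≤ |m - 2 - (d + a) * (j' + ℓ)| % s ∧ |m - 2 - (d + a) * (j' + ℓ)| % s ≤ 2 * d + 2 := by
  subst hs hl
  rcases ha with rfl | rfl <;> rcases hj with rfl | rfl | rfl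
  · exact key_13 (2*d+3) _ (2*d) (m - (d+1)*k) (2*d+2)
      (by push_cast; ring) (by linarith) (by linarith) (by linarith)
  · exact key_13 (2*d+3) _ (2*d+1) (m - (d+1)*k - 1) (2*d+2)
      (by push_cast; ring) (by linarith) (by linarith) (by linarith)
  · exact key_13 (2*d+3) _ (2*d+2) (m - (d+1)*k - 2) (2*d+2)
      (by push_cast; ring) (by linarith) (by linarith) (by linarith)
  · exact key_13 (2*d+3) _ (2*d+2) (-m - (d+2)*k) (2*d+2)
      (by push_cast; ring) (by linarith) (by linarith) (by linarith)
  · exact key_13 (2*d+3) _ (2*d+1) (-m - (d+2)*k - 1) (2*d+2)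
      (by push_cast; ring) (by linarith) (by linarith) (by linarith)
  · exact key_13 (2*d+3) _ (2*d) (-m - (d+2)*k - 2) (2*d+2)
      (by push_cast; ring) (by linarith) (by linarith) (by linarith)
end

section
/- Let d ≥ 1, m ≥ 3, s = 2d+3, a ∈ {1,2}, and suppose ℓ = k·s + (−1)^a·2·d·m for some integer k, and j' ∈ {−1, 1}. Then 1 ≤ (|d·(m−1) − (d+a)·(j'+ℓ)| mod s) ≤ 2d+2; in fact (|d·(m−1) − (d+a)·(j'+ℓ)| mod s) lies in {1, 2, 2d+1, 2d+2}. -/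
lemma stmt_14_helper (E s d q r : ℤ) (hd : 1 ≤ d) (hs : s = 2 * d + 3)
    (hr : r = 1 ∨ r = 2) (hE : E = r + s * q) :
    (1 ≤ |E| % s ∧ |E| % s ≤ 2 * d + 2) ∧
      |E| % s ∈ ({1, 2, 2 * d + 1, 2 * d + 2} : Set ℤ) := by
  rcases abs_choice E with h | h <;> rw [h]
  · rw [hE, Int.add_mul_emod_self_left, Int.emod_eq_of_lt (by omega) (by omega)]
    exact ⟨⟨by omega, by omega⟩, by simp [Set.mem_insert_iff]; omega⟩
  · have h2 : -E = (s - r) + s * (-q - 1) := by rw [hE]; ring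
    rw [h2, Int.add_mul_emod_self_left, Int.emod_eq_of_lt (by omega) (by omega)]
    exact ⟨⟨by omega, by omega⟩, by simp [Set.mem_insert_iff]; omega⟩

theorem stmt_14 (d m s ℓ k j' : ℤ) (a : ℕ) (hd : 1 ≤ d) (hm : 3 ≤ m)
    (hs : s = 2 * d + 3) (ha : a = 1 ∨ a = 2)
    (hl : ℓ = k * s + (-1) ^ a * 2 * d * m) (hj : j' = -1 ∨ j' = 1) :
    (1 ≤ |d * (m - 1) - (d + a) * (j' + ℓ)| % s ∧
      |d * (m - 1) - (d + a) * (j' + ℓ)| % s ≤ 2 * d + 2) ∧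
      |d * (m - 1) - (d + a) * (j' + ℓ)| % s ∈ ({1, 2, 2 * d + 1, 2 * d + 2} : Set ℤ) := by
  rcases ha with ha | ha <;> rcases hj with hj | hj <;> subst ha hj hl hs
  · exact stmt_14_helper _ _ d (d * m - (d + 1) * k) 1 hd rfl (Or.inl rfl)
      (by push_cast; ring)
  · exact stmt_14_helper _ _ d (d * m - (d + 1) * k - 1) 2 hd rfl (Or.inr rfl)
      (by push_cast; ring)
  · exact stmt_14_helper _ _ d (-(d * m) - (d + 2) * k) 2 hd rfl (Or.inr rfl)
      (by push_cast; ring)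
  · exact stmt_14_helper _ _ d (-(d * m) - (d + 2) * k - 1) 1 hd rfl (Or.inl rfl)
      (by push_cast; ring)
end

section
/- Let d ≥ 1, m ≥ 3, s = 2d+3, a ∈ {1,2}, and suppose ℓ = k·s + (−1)^a·2·d·m for some integer k. Then (|d·(m−2) − (d+a)·ℓ| mod s) equals 2d or 3; in particular 1 ≤ (|d·(m−2) − (d+a)·ℓ| mod s) ≤ 2d+2. -/
theorem stmt_15 (d m s ℓ k : ℤ) (a : ℕ) (hd : 1 ≤ d) (hm : 3 ≤ m)
    (hs : s = 2 * d + 3) (ha : a = 1 ∨ a = 2)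
    (hl : ℓ = k * s + (-1) ^ a * 2 * d * m) :
    (|d * (m - 2) - (d + a) * ℓ| % s = 2 * d ∨ |d * (m - 2) - (d + a) * ℓ| % s = 3) ∧
      1 ≤ |d * (m - 2) - (d + a) * ℓ| % s ∧ |d * (m - 2) - (d + a) * ℓ| % s ≤ 2 * d + 2 := by
  set E := d * (m - 2) - (d + (a : ℤ)) * ℓ with hEdef
  obtain ⟨t, hE⟩ : ∃ t : ℤ, E = s * t - 2 * d := by
    rcases ha with h | h <;> subst h <;> subst hl <;> subst hs
    · exact ⟨d * m - (d + 1) * k, by push_cast [hEdef]; ring⟩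
    · exact ⟨-(d * m) - (d + 2) * k, by push_cast [hEdef]; ring⟩
  have h1 : E % s = 3 := by
    have : E = 3 + s * (t - 1) := by rw [hE, hs]; ring
    rw [this, Int.add_mul_emod_self_left]
    exact Int.emod_eq_of_lt (by norm_num) (by omega)
  have h2 : (-E) % s = 2 * d := by
    have : -E = 2 * d + s * (-t) := by rw [hE]; ring
    rw [this, Int.add_mul_emod_self_left]
    exact Int.emod_eq_of_lt (by omega) (by omega)
  rcases abs_cases E with ⟨h, _⟩ | ⟨h, _⟩ <;> rw [h]
  · rw [h1]; exact ⟨Or.inr rfl, by omega, by omega⟩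
  · rw [h2]; exact ⟨Or.inl rfl, by omega, by omega⟩
end

section
/- If G is a graph with maximum degree Δ and G contains a vertex with Δ neighbours each of which has degree Δ, then for every integer d with 1 ≤ d ≤ Δ, the L(d,1)-labeling number satisfies λ_1^d(G) ≥ Δ + 2d − 2. -/
/-- `f` is an `L(d,1)`-labeling of `G`: labels of adjacent vertices differ by at
least `d`, and labels of vertices at distance exactly two differ by at least `1`. -/
def IsLD1Labeling {V : Type*} (G : SimpleGraph V) (d : ℕ) (f : V → ℕ) : Prop :=
  (∀ u v, G.Adj u v → (d : ℤ) ≤ |(f u : ℤ) - (f v : ℤ)|) ∧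
  (∀ u v, G.dist u v = 2 → (1 : ℤ) ≤ |(f u : ℤ) - (f v : ℤ)|)

/-- The span of a labeling: the largest label minus the smallest label. -/
noncomputable def labelSpan {V : Type*} (f : V → ℕ) : ℕ :=
  sSup (Set.range f) - sInf (Set.range f)

/-- `λ₁ᵈ(G)`: the minimum span over all `L(d,1)`-labelings of `G`. -/
noncomputable def lambdaLD1 {V : Type*} (G : SimpleGraph V) (d : ℕ) : ℕ :=
  sInf {k | ∃ f : V → ℕ, IsLD1Labeling G d f ∧ labelSpan f = k}

lemma key_bound {V : Type*} [Fintype V] (G : SimpleGraph V) [DecidableRel G.Adj]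
    (Δ : ℕ) (v : V) (hv : G.degree v = Δ)
    (hnb : ∀ u ∈ G.neighborFinset v, G.degree u = Δ)
    (d : ℕ) (hd1 : 1 ≤ d) (hdΔ : d ≤ Δ)
    (f : V → ℕ) (hf : IsLD1Labeling G d f) :
    Δ + 2 * d - 2 ≤ labelSpan f := by
  classical
  set L := sInf (Set.range f) with hLdef
  set U := sSup (Set.range f) with hUdef
  have hbdd : BddAbove (Set.range f) := (Set.finite_range f).bddAbove
  have hU : ∀ x, f x ≤ U := fun x => le_csSup hbdd ⟨x, rfl⟩
  have hL : ∀ x, L ≤ f x := fun x => Nat.sInf_le ⟨x, rfl⟩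
  have hspan : labelSpan f = U - L := rfl
  -- neighbors of a common vertex get pairwise distinct labels
  have hneq : ∀ x u w : V, G.Adj x u → G.Adj x w → u ≠ w → f u ≠ f w := by
    intro x u w hxu hxw huw heq
    by_cases hadj : G.Adj u w
    · have h := hf.1 u w hadj
      rw [heq] at h
      simp at h
      omega
    · have h2 : G.dist u w = 2 := by
        have hle : G.dist u w ≤ 2 := by
          have := SimpleGraph.dist_le
            (SimpleGraph.Walk.cons hxu.symm (SimpleGraph.Walk.cons hxw SimpleGraph.Walk.nil))
          simpa using this
        have hr : G.Reachable u w :=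
          ⟨SimpleGraph.Walk.cons hxu.symm (SimpleGraph.Walk.cons hxw SimpleGraph.Walk.nil)⟩
        have hpos : 0 < G.dist u w := hr.pos_dist_of_ne huw
        have hne1 : G.dist u w ≠ 1 := fun h => hadj (SimpleGraph.dist_eq_one_iff_adj.mp h)
        omega
      have h := hf.2 u w h2
      rw [heq] at h
      simp at h
  -- the image of the neighbor set has full cardinality
  have himg : ∀ x : V, ((G.neighborFinset x).image f).card = G.degree x := by
    intro x
    rw [← SimpleGraph.card_neighborFinset_eq_degree]
    apply Finset.card_image_of_injOn
    intro a ha b hb hab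
    by_contra hne
    exact hneq x a b (by simpa using ha) (by simpa using hb) hne hab
  -- main counting argument for a "central" vertex of degree Δ
  have main : ∀ x : V, G.degree x = Δ → L + d ≤ f x + 1 → f x + d ≤ U + 1 →
      Δ + 2 * d - 2 ≤ U - L := by
    intro x hdeg h1 h2
    have hsub : (G.neighborFinset x).image f ⊆
        Finset.Icc L U \ Finset.Icc (f x + 1 - d) (f x + d - 1) := by
      intro t ht
      rw [Finset.mem_image] at ht
      obtain ⟨u, hu, rfl⟩ := ht
      rw [SimpleGraph.mem_neighborFinset] at hu
      have h := hf.1 x u hu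
      rw [Finset.mem_sdiff, Finset.mem_Icc, Finset.mem_Icc]
      rcases le_abs.mp h with h' | h' <;>
        · constructor
          · exact ⟨hL u, hU u⟩
          · omega
    have hinner : Finset.Icc (f x + 1 - d) (f x + d - 1) ⊆ Finset.Icc L U := by
      intro t ht
      rw [Finset.mem_Icc] at ht ⊢
      have := hL x
      have := hU x
      omega
    have hcard := Finset.card_le_card hsub
    rw [Finset.card_sdiff_of_subset hinner, Nat.card_Icc, Nat.card_Icc, himg x, hdeg] at hcard
    have := hL x
    have := hU x
    omega
  rw [hspan]
  by_cases hcase : ∃ x ∈ insert v (G.neighborFinset v), L + d ≤ f x + 1 ∧ f x + d ≤ U + 1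
  · obtain ⟨x, hx, h1, h2⟩ := hcase
    rcases Finset.mem_insert.mp hx with rfl | hx'
    · exact main x hv h1 h2
    · exact main x (hnb x hx') h1 h2
  · push_neg at hcase
    exfalso
    have hΔ1 : 1 ≤ Δ := le_trans hd1 hdΔ
    have hvclass := hcase v (Finset.mem_insert_self _ _)
    by_cases hvlow : L + d ≤ f v + 1
    · -- f v is in the top region
      have hvtop : U + 1 < f v + d := hvclass hvlow
      -- every neighbor is in the bottom region
      have hbot : ∀ u ∈ G.neighborFinset v, f u ≤ L + d - 2 := by
        intro u hu
        have hclass := hcase u (Finset.mem_insert_of_mem hu)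
        by_cases hul : L + d ≤ f u + 1
        · -- u in top region too: contradicts adjacency
          have hutop : U + 1 < f u + d := hclass hul
          have h := hf.1 v u ((SimpleGraph.mem_neighborFinset _ _ _).mp hu)
          have h1 := hU u
          have h2 := hU v
          rcases le_abs.mp h with h' | h' <;> omega
        · omega
      have hsub : (G.neighborFinset v).image f ⊆ Finset.Icc L (L + d - 2) := by
        intro t ht
        rw [Finset.mem_image] at ht
        obtain ⟨u, hu, rfl⟩ := ht
        rw [Finset.mem_Icc]
        exact ⟨hL u, hbot u hu⟩
      have hcard := Finset.card_le_card hsub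
      rw [himg v, hv, Nat.card_Icc] at hcard
      have h3 := hU v
      have h4 := hL v
      omega
    · -- f v is in the bottom region
      have hvbot : f v + 1 < L + d := by omega
      have htop : ∀ u ∈ G.neighborFinset v, U + 1 < f u + d := by
        intro u hu
        have hclass := hcase u (Finset.mem_insert_of_mem hu)
        by_cases hul : L + d ≤ f u + 1
        · exact hclass hul
        · -- u in bottom region too: contradicts adjacency
          exfalso
          have h := hf.1 v u ((SimpleGraph.mem_neighborFinset _ _ _).mp hu)
          have h1 := hL u
          have h2 := hL v
          rcases le_abs.mp h with h' | h' <;> omega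
      have hsub : (G.neighborFinset v).image f ⊆ Finset.Icc (U + 2 - d) U := by
        intro t ht
        rw [Finset.mem_image] at ht
        obtain ⟨u, hu, rfl⟩ := ht
        rw [Finset.mem_Icc]
        exact ⟨by have := htop u hu; omega, hU u⟩
      have hcard := Finset.card_le_card hsub
      rw [himg v, hv, Nat.card_Icc] at hcard
      have := hL v
      have := hU v
      omega

lemma exists_labeling {V : Type*} [Fintype V] (G : SimpleGraph V) (d : ℕ) (hd1 : 1 ≤ d) :
    ∃ f : V → ℕ, IsLD1Labeling G d f := by
  classical
  let e := Fintype.equivFin V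
  have habs : ∀ a b : V, a ≠ b →
      (d : ℤ) ≤ |((d * (e a : ℕ) : ℕ) : ℤ) - ((d * (e b : ℕ) : ℕ) : ℤ)| := by
    intro a b hab
    have hne : (e a : ℕ) ≠ (e b : ℕ) := by
      intro h
      exact hab (e.injective (Fin.ext h))
    have hkey : d * (e a : ℕ) + d ≤ d * (e b : ℕ) ∨
        d * (e b : ℕ) + d ≤ d * (e a : ℕ) := by
      rcases Nat.lt_or_ge (e a : ℕ) (e b : ℕ) with h | h
      · left
        have := Nat.mul_le_mul (le_refl d) (show (e a : ℕ) + 1 ≤ (e b : ℕ) by omega)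
        rw [Nat.mul_add, Nat.mul_one] at this
        exact this
      · right
        have := Nat.mul_le_mul (le_refl d) (show (e b : ℕ) + 1 ≤ (e a : ℕ) by omega)
        rw [Nat.mul_add, Nat.mul_one] at this
        exact this
    rcases hkey with h | h
    · rw [abs_sub_comm]
      refine le_trans ?_ (le_abs_self _)
      omega
    · refine le_trans ?_ (le_abs_self _)
      omega
  refine ⟨fun x => d * (e x : ℕ), ?_, ?_⟩
  · intro u w huw
    exact habs u w huw.ne
  · intro u w hdist
    have hne : u ≠ w := by
      intro h
      subst h
      rw [SimpleGraph.dist_self] at hdist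
      omega
    calc (1 : ℤ) ≤ (d : ℤ) := by exact_mod_cast hd1
      _ ≤ _ := habs u w hne

theorem stmt_16 {V : Type*} [Fintype V] (G : SimpleGraph V) [DecidableRel G.Adj]
    (Δ : ℕ) (hΔ : G.maxDegree = Δ)
    (v : V) (hv : G.degree v = Δ)
    (hnb : ∀ u ∈ G.neighborFinset v, G.degree u = Δ)
    (d : ℕ) (hd1 : 1 ≤ d) (hdΔ : d ≤ Δ) :
    Δ + 2 * d - 2 ≤ lambdaLD1 G d := by
  classical
  have hS : {k | ∃ f : V → ℕ, IsLD1Labeling G d f ∧ labelSpan f = k}.Nonempty := by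
    obtain ⟨f, hf⟩ := exists_labeling G d hd1
    exact ⟨labelSpan f, f, hf, rfl⟩
  have hmem := Nat.sInf_mem hS
  obtain ⟨f, hf, hk⟩ := hmem
  rw [lambdaLD1, ← hk]
  exact key_bound G Δ v hv hnb d hd1 hdΔ f hf
end

section
/- Let d ≥ 1, m ≥ 3, s = 2d+3, and let n be a positive multiple of s. Suppose ℓ = (k·s + (−1)^a·2·m) mod n for some a ∈ {1,2} and integer k. Then the function f on Z_m × Z_n given by f(i,j) = (i + (d+a)·j) mod s is an L(d,1)-labeling of the direct graph bundle C_m ×^{σ_ℓ} C_n with labels in {0,1,...,2d+2}; consequently λ_1^d(C_m ×^{σ_ℓ} C_n) ≤ 2d+2. -/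
lemma aux_pin3 {S z : ℤ} (h0 : 0 < S) (h : S ∣ z) (h1 : -(2*S) < z) (h2 : z < 2*S) :
    z = -S ∨ z = 0 ∨ z = S := by
  obtain ⟨t, rfl⟩ := h
  have ht2 : t < 2 := lt_of_mul_lt_mul_left (show S * t < S * 2 by linarith) h0.le
  have ht1 : -2 < t := lt_of_mul_lt_mul_left (show S * (-2) < S * t by linarith) h0.le
  interval_cases t <;> simp

def directBundle (m n : ℕ) (ℓ : ZMod n) : SimpleGraph (ZMod m × ZMod n) :=
  SimpleGraph.fromRel (fun u v =>
    v.1 = u.1 + 1 ∧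
      ((u.1 = -1 ∧ (v.2 = u.2 + 1 + ℓ ∨ v.2 = u.2 - 1 + ℓ)) ∨
       (u.1 ≠ -1 ∧ (v.2 = u.2 + 1 ∨ v.2 = u.2 - 1))))

lemma aux_zmod_dvd {n : ℕ} [NeZero n] (x y : ZMod n) (cz : ℤ) (h : y = x + (cz : ZMod n)) :
    (n:ℤ) ∣ ((y.val:ℤ) - x.val - cz) := by
  rw [← ZMod.intCast_zmod_eq_zero_iff_dvd]
  push_cast
  simp [ZMod.natCast_val, ZMod.cast_id, h]

lemma aux_neg_one_cast {m : ℕ} [NeZero m] (hm : 3 ≤ m) : ((m-1 : ℕ) : ZMod m) = -1 := by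
  have h := ZMod.natCast_self m
  push_cast [Nat.cast_sub (by omega : 1 ≤ m)]
  rw [h]; ring

lemma aux_neg_one_val {m : ℕ} [NeZero m] (hm : 3 ≤ m) : (((-1 : ZMod m)).val : ℤ) = m - 1 := by
  rw [← aux_neg_one_cast hm, ZMod.val_cast_of_lt (by omega)]
  push_cast [Nat.cast_sub (by omega : 1 ≤ m)]
  ring

lemma aux_val_add_one {m : ℕ} [NeZero m] (hm : 3 ≤ m) (x : ZMod m) (hx : x ≠ -1) :
    (((x+1).val : ℤ)) = x.val + 1 := by
  haveI : Fact (1 < m) := ⟨by omega⟩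
  have hv : x.val ≠ m - 1 := by
    intro h
    apply hx
    have hx2 : ((x.val : ℕ) : ZMod m) = x := by
      rw [ZMod.natCast_val, ZMod.cast_id]
    rw [← hx2, h, aux_neg_one_cast hm]
  have hlt : x.val < m := x.val_lt
  rw [ZMod.val_add, ZMod.val_one]
  rw [Nat.mod_eq_of_lt (by omega)]
  push_cast; ring

lemma aux_key (d m s n a : ℕ) (ℓ : ℤ) (hm : 3 ≤ m) (hs : s = 2*d+3)
    (hsn : (s:ℤ) ∣ (n:ℤ)) (hn0 : 0 < n)
    (ha : a = 1 ∨ a = 2)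
    (hl2 : (s:ℤ) ∣ (ℓ - (-1)^a * 2 * (m:ℤ)))
    (u v : ZMod m × ZMod n)
    (h : v.1 = u.1 + 1 ∧
      ((u.1 = -1 ∧ (v.2 = u.2 + 1 + (ℓ : ZMod n) ∨ v.2 = u.2 - 1 + (ℓ : ZMod n))) ∨
       (u.1 ≠ -1 ∧ (v.2 = u.2 + 1 ∨ v.2 = u.2 - 1)))) :
    ∃ ε : ℤ, (ε = 1 ∨ ε = -1) ∧
      v.1 = u.1 + 1 ∧
      v.2 = u.2 + (ε : ZMod n) + (if u.1 = -1 then (ℓ : ZMod n) else 0) ∧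
      (s:ℤ) ∣ ((((v.1.val + (d+a) * v.2.val) % s : ℕ) : ℤ)
              - (((u.1.val + (d+a) * u.2.val) % s : ℕ) : ℤ) - (1 + ε * ((d:ℤ)+a))) := by
  haveI : NeZero m := ⟨by omega⟩
  haveI : NeZero n := ⟨by omega⟩
  have hs0 : 0 < s := by omega
  obtain ⟨h1, hrest⟩ := h
  -- reduction mod s
  have hmod : ∀ N : ℕ, (s:ℤ) ∣ (((N % s : ℕ) : ℤ) - (N:ℤ)) := by
    intro N
    have hc : ((N % s : ℕ) : ℤ) = (N:ℤ) % (s:ℤ) := Int.natCast_mod N s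
    rw [hc, Int.emod_def]
    exact ⟨-((N:ℤ)/(s:ℤ)), by ring⟩
  -- it suffices to prove the divisibility for the unreduced values
  have hsuff : ∀ ε : ℤ,
      (s:ℤ) ∣ (((v.1.val:ℤ) + ((d:ℤ)+a) * v.2.val) - ((u.1.val:ℤ) + ((d:ℤ)+a) * u.2.val)
        - (1 + ε * ((d:ℤ)+a))) →
      (s:ℤ) ∣ ((((v.1.val + (d+a) * v.2.val) % s : ℕ) : ℤ)
              - (((u.1.val + (d+a) * u.2.val) % s : ℕ) : ℤ) - (1 + ε * ((d:ℤ)+a))) := by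
    intro ε hcore
    have h1' := hmod (v.1.val + (d+a) * v.2.val)
    have h2' := hmod (u.1.val + (d+a) * u.2.val)
    have heq : ((((v.1.val + (d+a) * v.2.val) % s : ℕ) : ℤ)
              - (((u.1.val + (d+a) * u.2.val) % s : ℕ) : ℤ) - (1 + ε * ((d:ℤ)+a)))
        = ((((v.1.val + (d+a) * v.2.val) % s : ℕ) : ℤ) - ((v.1.val + (d+a) * v.2.val : ℕ) : ℤ))
          - ((((u.1.val + (d+a) * u.2.val) % s : ℕ) : ℤ) - ((u.1.val + (d+a) * u.2.val : ℕ) : ℤ))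
          + (((v.1.val:ℤ) + ((d:ℤ)+a) * v.2.val) - ((u.1.val:ℤ) + ((d:ℤ)+a) * u.2.val)
              - (1 + ε * ((d:ℤ)+a))) := by
      push_cast; ring
    rw [heq]
    exact dvd_add (dvd_sub h1' h2') hcore
  rcases hrest with ⟨hu1, hj | hj⟩ | ⟨hu1, hj | hj⟩
  · -- wrap, ε = 1
    refine ⟨1, Or.inl rfl, h1, ?_, ?_⟩
    · rw [if_pos hu1, hj]; push_cast; ring
    · apply hsuff
      have hu1v : ((u.1).val : ℤ) = (m:ℤ) - 1 := by rw [hu1]; exact aux_neg_one_val hm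
      have hv1v : ((v.1).val : ℤ) = 0 := by
        rw [h1, hu1]; simp
      have hjd : (n:ℤ) ∣ ((v.2.val:ℤ) - u.2.val - (1 + ℓ)) :=
        aux_zmod_dvd u.2 v.2 (1+ℓ) (by rw [hj]; push_cast; ring)
      have hjs := dvd_trans hsn hjd
      rcases ha with rfl | rfl
      · have hident : (((v.1.val:ℤ) + ((d:ℤ)+1) * v.2.val) - ((u.1.val:ℤ) + ((d:ℤ)+1) * u.2.val)
            - (1 + 1 * ((d:ℤ)+1)))
            = ((d:ℤ)+1) * ((v.2.val:ℤ) - u.2.val - (1 + ℓ))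
              + ((d:ℤ)+1) * (ℓ - (-1)^1 * 2 * (m:ℤ)) + (-(m:ℤ)) * (s:ℤ) := by
          rw [hu1v, hv1v, hs]; push_cast; ring
        rw [show ((1:ℕ):ℤ) = 1 by norm_num] at *
        rw [hident]
        exact dvd_add (dvd_add (hjs.mul_left _) (hl2.mul_left _)) (dvd_mul_left _ _)
      · have hident : (((v.1.val:ℤ) + ((d:ℤ)+2) * v.2.val) - ((u.1.val:ℤ) + ((d:ℤ)+2) * u.2.val)
            - (1 + 1 * ((d:ℤ)+2)))
            = ((d:ℤ)+2) * ((v.2.val:ℤ) - u.2.val - (1 + ℓ))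
              + ((d:ℤ)+2) * (ℓ - (-1)^2 * 2 * (m:ℤ)) + ((m:ℤ)) * (s:ℤ) := by
          rw [hu1v, hv1v, hs]; push_cast; ring
        rw [show ((2:ℕ):ℤ) = 2 by norm_num] at *
        rw [hident]
        exact dvd_add (dvd_add (hjs.mul_left _) (hl2.mul_left _)) (dvd_mul_left _ _)
  · -- wrap, ε = -1
    refine ⟨-1, Or.inr rfl, h1, ?_, ?_⟩
    · rw [if_pos hu1, hj]; push_cast; ring
    · apply hsuff
      have hu1v : ((u.1).val : ℤ) = (m:ℤ) - 1 := by rw [hu1]; exact aux_neg_one_val hm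
      have hv1v : ((v.1).val : ℤ) = 0 := by rw [h1, hu1]; simp
      have hjd : (n:ℤ) ∣ ((v.2.val:ℤ) - u.2.val - (-1 + ℓ)) :=
        aux_zmod_dvd u.2 v.2 (-1+ℓ) (by rw [hj]; push_cast; ring)
      have hjs := dvd_trans hsn hjd
      rcases ha with rfl | rfl
      · have hident : (((v.1.val:ℤ) + ((d:ℤ)+1) * v.2.val) - ((u.1.val:ℤ) + ((d:ℤ)+1) * u.2.val)
            - (1 + (-1) * ((d:ℤ)+1)))
            = ((d:ℤ)+1) * ((v.2.val:ℤ) - u.2.val - (-1 + ℓ))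
              + ((d:ℤ)+1) * (ℓ - (-1)^1 * 2 * (m:ℤ)) + (-(m:ℤ)) * (s:ℤ) := by
          rw [hu1v, hv1v, hs]; push_cast; ring
        rw [show ((1:ℕ):ℤ) = 1 by norm_num] at *
        rw [hident]
        exact dvd_add (dvd_add (hjs.mul_left _) (hl2.mul_left _)) (dvd_mul_left _ _)
      · have hident : (((v.1.val:ℤ) + ((d:ℤ)+2) * v.2.val) - ((u.1.val:ℤ) + ((d:ℤ)+2) * u.2.val)
            - (1 + (-1) * ((d:ℤ)+2)))
            = ((d:ℤ)+2) * ((v.2.val:ℤ) - u.2.val - (-1 + ℓ))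
              + ((d:ℤ)+2) * (ℓ - (-1)^2 * 2 * (m:ℤ)) + ((m:ℤ)) * (s:ℤ) := by
          rw [hu1v, hv1v, hs]; push_cast; ring
        rw [show ((2:ℕ):ℤ) = 2 by norm_num] at *
        rw [hident]
        exact dvd_add (dvd_add (hjs.mul_left _) (hl2.mul_left _)) (dvd_mul_left _ _)
  · -- non-wrap, ε = 1
    refine ⟨1, Or.inl rfl, h1, ?_, ?_⟩
    · rw [if_neg hu1, hj]; push_cast; ring
    · apply hsuff
      have hv1v : ((v.1).val : ℤ) = u.1.val + 1 := by rw [h1]; exact aux_val_add_one hm u.1 hu1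
      have hjd : (n:ℤ) ∣ ((v.2.val:ℤ) - u.2.val - 1) :=
        aux_zmod_dvd u.2 v.2 1 (by rw [hj]; push_cast; ring)
      have hjs := dvd_trans hsn hjd
      have hident : (((v.1.val:ℤ) + ((d:ℤ)+a) * v.2.val) - ((u.1.val:ℤ) + ((d:ℤ)+a) * u.2.val)
            - (1 + 1 * ((d:ℤ)+a)))
          = ((d:ℤ)+a) * ((v.2.val:ℤ) - u.2.val - 1) := by
        rw [hv1v]; ring
      rw [hident]
      exact hjs.mul_left _
  · -- non-wrap, ε = -1
    refine ⟨-1, Or.inr rfl, h1, ?_, ?_⟩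
    · rw [if_neg hu1, hj]; push_cast; ring
    · apply hsuff
      have hv1v : ((v.1).val : ℤ) = u.1.val + 1 := by rw [h1]; exact aux_val_add_one hm u.1 hu1
      have hjd : (n:ℤ) ∣ ((v.2.val:ℤ) - u.2.val - (-1)) :=
        aux_zmod_dvd u.2 v.2 (-1) (by rw [hj]; push_cast; ring)
      have hjs := dvd_trans hsn hjd
      have hident : (((v.1.val:ℤ) + ((d:ℤ)+a) * v.2.val) - ((u.1.val:ℤ) + ((d:ℤ)+a) * u.2.val)
            - (1 + (-1) * ((d:ℤ)+a)))
          = ((d:ℤ)+a) * ((v.2.val:ℤ) - u.2.val - (-1)) := by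
        rw [hv1v]; ring
      rw [hident]
      exact hjs.mul_left _

theorem stmt_17 (d m s n : ℕ) (a : ℕ) (k ℓ : ℤ) (c : ℕ)
    (hd : 1 ≤ d) (hm : 3 ≤ m) (hs : s = 2 * d + 3)
    (hc : 1 ≤ c) (hn : n = c * s)
    (ha : a = 1 ∨ a = 2)
    (hl : ℓ = (k * (s : ℤ) + (-1) ^ a * 2 * (m : ℤ)) % (n : ℤ)) :
    IsLD1Labeling (directBundle m n (ℓ : ZMod n)) d
        (fun p => (p.1.val + (d + a) * p.2.val) % s) ∧
      (∀ p : ZMod m × ZMod n, (p.1.val + (d + a) * p.2.val) % s ≤ 2 * d + 2) ∧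
      lambdaLD1 (directBundle m n (ℓ : ZMod n)) d ≤ 2 * d + 2 := by
  have hs0 : 0 < s := by omega
  have hn0 : 0 < n := by
    rw [hn]; exact Nat.mul_pos (by omega) hs0
  have hsn : (s:ℤ) ∣ (n:ℤ) := by
    rw [hn]; push_cast; exact dvd_mul_left _ _
  have hspos : (0:ℤ) < (s:ℤ) := by exact_mod_cast hs0
  have hl2 : (s:ℤ) ∣ (ℓ - (-1)^a * 2 * (m:ℤ)) := by
    have h1 : (n:ℤ) ∣ (ℓ - (k*(s:ℤ) + (-1)^a*2*(m:ℤ))) := by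
      rw [hl, Int.emod_def]
      exact ⟨-((k*(s:ℤ) + (-1)^a*2*(m:ℤ))/(n:ℤ)), by ring⟩
    have h2 := dvd_trans hsn h1
    have h3 : ℓ - (-1)^a*2*(m:ℤ) = (ℓ - (k*(s:ℤ) + (-1)^a*2*(m:ℤ))) + k*(s:ℤ) := by ring
    rw [h3]
    exact dvd_add h2 (dvd_mul_left _ _)
  set G := directBundle m n (ℓ : ZMod n) with hG
  have hFlt : ∀ p : ZMod m × ZMod n, (p.1.val + (d+a) * p.2.val) % s < s :=
    fun p => Nat.mod_lt _ hs0
  -- adjacency condition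
  have hadj : ∀ u v : ZMod m × ZMod n, G.Adj u v →
      (d:ℤ) ≤ |(((u.1.val + (d+a) * u.2.val) % s : ℕ) : ℤ)
               - (((v.1.val + (d+a) * v.2.val) % s : ℕ) : ℤ)| := by
    intro u v huv
    rw [hG, directBundle, SimpleGraph.fromRel_adj] at huv
    have bu := hFlt u
    have bv := hFlt v
    obtain ⟨hne, hrel | hrel⟩ := huv
    · obtain ⟨ε, hε, -, -, hdvd⟩ := aux_key d m s n a ℓ hm hs hsn hn0 ha hl2 u v hrel
      rw [le_abs]
      rcases hε with rfl | rfl <;> rcases ha with rfl | rfl <;>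
        · have h3 := aux_pin3 hspos hdvd (by omega) (by omega)
          omega
    · obtain ⟨ε, hε, -, -, hdvd⟩ := aux_key d m s n a ℓ hm hs hsn hn0 ha hl2 v u hrel
      rw [le_abs]
      rcases hε with rfl | rfl <;> rcases ha with rfl | rfl <;>
        · have h3 := aux_pin3 hspos hdvd (by omega) (by omega)
          omega
  -- distance two condition
  have hdist : ∀ u v : ZMod m × ZMod n, G.dist u v = 2 →
      (1:ℤ) ≤ |(((u.1.val + (d+a) * u.2.val) % s : ℕ) : ℤ)
               - (((v.1.val + (d+a) * v.2.val) % s : ℕ) : ℤ)| := by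
    intro u v hdv
    have hne : u ≠ v := by
      rintro rfl
      rw [SimpleGraph.dist_self] at hdv
      omega
    have hreach : G.Reachable u v := by
      by_contra hr
      have := SimpleGraph.dist_eq_zero_iff_eq_or_not_reachable.mpr (Or.inr hr)
      omega
    obtain ⟨p, hp⟩ := hreach.exists_walk_length_eq_dist
    rw [hdv] at hp
    set w := p.getVert 1 with hw
    have ha1 : G.Adj u w := by
      have := p.adj_getVert_succ (i := 0) (by omega)
      simpa [SimpleGraph.Walk.getVert_zero] using this
    have ha2 : G.Adj w v := by
      have h2 : p.getVert 2 = v := by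
        conv_lhs => rw [show (2:ℕ) = p.length from hp.symm]
        exact p.getVert_length
      have := p.adj_getVert_succ (i := 1) (by omega)
      rwa [show (1+1 : ℕ) = 2 from rfl, h2] at this
    apply Int.one_le_abs
    intro h0
    rw [hG, directBundle, SimpleGraph.fromRel_adj] at ha1 ha2
    have bu := hFlt u
    have bv := hFlt v
    have bw := hFlt w
    obtain ⟨-, hr1 | hr1⟩ := ha1 <;> obtain ⟨-, hr2 | hr2⟩ := ha2
    · -- rel u w , rel w v : chain
      obtain ⟨ε₁, hε₁, -, -, ⟨t₁, e₁⟩⟩ := aux_key d m s n a ℓ hm hs hsn hn0 ha hl2 u w hr1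
      obtain ⟨ε₂, hε₂, -, -, ⟨t₂, e₂⟩⟩ := aux_key d m s n a ℓ hm hs hsn hn0 ha hl2 w v hr2
      have hz : (((v.1.val + (d+a) * v.2.val) % s : ℕ) : ℤ)
          - (((u.1.val + (d+a) * u.2.val) % s : ℕ) : ℤ)
          - (2 + (ε₁+ε₂) * ((d:ℤ)+a)) = (s:ℤ) * (t₁ + t₂) := by
        linear_combination e₁ + e₂
      rcases hε₁ with rfl | rfl <;> rcases hε₂ with rfl | rfl <;> rcases ha with rfl | rfl <;>
        · have h3 := aux_pin3 hspos ⟨t₁ + t₂, hz⟩ (by omega) (by omega)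
          omega
    · -- rel u w , rel v w : both toward w
      obtain ⟨ε₁, hε₁, hw1, hw2, ⟨t₁, e₁⟩⟩ := aux_key d m s n a ℓ hm hs hsn hn0 ha hl2 u w hr1
      obtain ⟨ε₂, hε₂, hv1, hv2, ⟨t₂, e₂⟩⟩ := aux_key d m s n a ℓ hm hs hsn hn0 ha hl2 v w hr2
      have hz : (((u.1.val + (d+a) * u.2.val) % s : ℕ) : ℤ)
          - (((v.1.val + (d+a) * v.2.val) % s : ℕ) : ℤ)
          - ((ε₂ - ε₁) * ((d:ℤ)+a)) = (s:ℤ) * (t₂ - t₁) := by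
        linear_combination e₂ - e₁
      have heq1 : u.1 = v.1 := add_right_cancel (hw1.symm.trans hv1)
      rcases hε₁ with rfl | rfl <;> rcases hε₂ with rfl | rfl
      · -- same sign: u = v
        apply hne
        have h2 : u.2 = v.2 := by
          have h' := hw2.symm.trans hv2
          rw [heq1] at h'
          exact add_right_cancel (add_right_cancel h')
        exact Prod.ext heq1 h2
      · rcases ha with rfl | rfl <;>
          · have h3 := aux_pin3 hspos ⟨t₂ - t₁, hz⟩ (by omega) (by omega)
            omega
      · rcases ha with rfl | rfl <;>
          · have h3 := aux_pin3 hspos ⟨t₂ - t₁, hz⟩ (by omega) (by omega)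
            omega
      · apply hne
        have h2 : u.2 = v.2 := by
          have h' := hw2.symm.trans hv2
          rw [heq1] at h'
          exact add_right_cancel (add_right_cancel h')
        exact Prod.ext heq1 h2
    · -- rel w u , rel w v : both from w
      obtain ⟨ε₁, hε₁, hw1, hw2, ⟨t₁, e₁⟩⟩ := aux_key d m s n a ℓ hm hs hsn hn0 ha hl2 w u hr1
      obtain ⟨ε₂, hε₂, hv1, hv2, ⟨t₂, e₂⟩⟩ := aux_key d m s n a ℓ hm hs hsn hn0 ha hl2 w v hr2
      have hz : (((u.1.val + (d+a) * u.2.val) % s : ℕ) : ℤ)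
          - (((v.1.val + (d+a) * v.2.val) % s : ℕ) : ℤ)
          - ((ε₁ - ε₂) * ((d:ℤ)+a)) = (s:ℤ) * (t₁ - t₂) := by
        linear_combination e₁ - e₂
      have heq1 : u.1 = v.1 := hw1.trans hv1.symm
      rcases hε₁ with rfl | rfl <;> rcases hε₂ with rfl | rfl
      · exact hne (Prod.ext heq1 (hw2.trans hv2.symm))
      · rcases ha with rfl | rfl <;>
          · have h3 := aux_pin3 hspos ⟨t₁ - t₂, hz⟩ (by omega) (by omega)
            omega
      · rcases ha with rfl | rfl <;>
          · have h3 := aux_pin3 hspos ⟨t₁ - t₂, hz⟩ (by omega) (by omega)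
            omega
      · exact hne (Prod.ext heq1 (hw2.trans hv2.symm))
    · -- rel w u , rel v w : reverse chain
      obtain ⟨ε₁, hε₁, -, -, ⟨t₁, e₁⟩⟩ := aux_key d m s n a ℓ hm hs hsn hn0 ha hl2 w u hr1
      obtain ⟨ε₂, hε₂, -, -, ⟨t₂, e₂⟩⟩ := aux_key d m s n a ℓ hm hs hsn hn0 ha hl2 v w hr2
      have hz : (((u.1.val + (d+a) * u.2.val) % s : ℕ) : ℤ)
          - (((v.1.val + (d+a) * v.2.val) % s : ℕ) : ℤ)
          - (2 + (ε₁+ε₂) * ((d:ℤ)+a)) = (s:ℤ) * (t₁ + t₂) := by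
        linear_combination e₁ + e₂
      rcases hε₁ with rfl | rfl <;> rcases hε₂ with rfl | rfl <;> rcases ha with rfl | rfl <;>
        · have h3 := aux_pin3 hspos ⟨t₁ + t₂, hz⟩ (by omega) (by omega)
          omega
  have hlab : IsLD1Labeling G d (fun p => (p.1.val + (d + a) * p.2.val) % s) :=
    ⟨hadj, hdist⟩
  have hbd : ∀ p : ZMod m × ZMod n, (p.1.val + (d + a) * p.2.val) % s ≤ 2 * d + 2 := by
    intro p; have := hFlt p; omega
  refine ⟨hlab, hbd, ?_⟩
  have hmem : labelSpan (fun p : ZMod m × ZMod n => (p.1.val + (d + a) * p.2.val) % s)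
      ∈ {k | ∃ f : ZMod m × ZMod n → ℕ, IsLD1Labeling G d f ∧ labelSpan f = k} :=
    ⟨_, hlab, rfl⟩
  have h1 : lambdaLD1 G d ≤ labelSpan (fun p : ZMod m × ZMod n =>
      (p.1.val + (d + a) * p.2.val) % s) := Nat.sInf_le hmem
  have h2 : labelSpan (fun p : ZMod m × ZMod n => (p.1.val + (d + a) * p.2.val) % s)
      ≤ 2 * d + 2 := by
    refine le_trans (Nat.sub_le _ _) ?_
    refine csSup_le ⟨_, Set.mem_range_self ((0,0) : ZMod m × ZMod n)⟩ ?_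
    rintro b ⟨p, rfl⟩
    exact hbd p
  exact le_trans h1 h2
end

section
/- Let d ≥ 1 with 1 ≤ d ≤ 4, m ≥ 3, s = 2d+3, and let n be a positive multiple of s. Suppose ℓ = (k·s + (−1)^a·2·d·m) mod n for some a ∈ {1,2} and integer k. Then λ_1^d(C_m □^{σ_ℓ} C_n) = 2d+2. -/
/-- The Cartesian graph bundle `C_m □^{σ_ℓ} C_n` with base `C_m`, fibre `C_n`
and cyclic `ℓ`-shift on the edge from `m-1` to `0`.  In every fibre `(i,j)` is
adjacent to `(i, j±1)`; `(i,j)` is adjacent to `(i+1, j)` for `i ≠ m-1`, and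
`(m-1, j)` is adjacent to `(0, j+ℓ)`. -/
def cartesianBundle (m n : ℕ) (ℓ : ZMod n) : SimpleGraph (ZMod m × ZMod n) :=
  SimpleGraph.fromRel (fun u v =>
    (v.1 = u.1 ∧ (v.2 = u.2 + 1 ∨ v.2 = u.2 - 1)) ∨
    (v.1 = u.1 + 1 ∧
      ((u.1 = -1 ∧ v.2 = u.2 + ℓ) ∨ (u.1 ≠ -1 ∧ v.2 = u.2))))

namespace Stmt18

def Fwd (m n : ℕ) (L : ZMod n) (u v : ZMod m × ZMod n) : Prop :=
  v.1 = u.1 + 1 ∧ ((u.1 = -1 ∧ v.2 = u.2 + L) ∨ (u.1 ≠ -1 ∧ v.2 = u.2))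

lemma fwd_inj {m n : ℕ} {L : ZMod n} {u v w : ZMod m × ZMod n}
    (h1 : Fwd m n L u w) (h2 : Fwd m n L v w) : u = v := by
  obtain ⟨e1, h1⟩ := h1; obtain ⟨e2, h2⟩ := h2
  have e : u.1 = v.1 := by
    have := e1.symm.trans e2; exact add_right_cancel this
  rcases h1 with ⟨hu1, hw2⟩ | ⟨hu1, hw2⟩ <;> rcases h2 with ⟨hv1, hw2'⟩ | ⟨hv1, hw2'⟩
  · exact Prod.ext e (by have := hw2.symm.trans hw2'; exact add_right_cancel this)
  · exact absurd (e ▸ hu1) hv1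
  · exact absurd (e.symm ▸ hv1) hu1
  · exact Prod.ext e (hw2.symm.trans hw2')

lemma fwd_func {m n : ℕ} {L : ZMod n} {u v w : ZMod m × ZMod n}
    (h1 : Fwd m n L w u) (h2 : Fwd m n L w v) : u = v := by
  obtain ⟨e1, h1⟩ := h1; obtain ⟨e2, h2⟩ := h2
  have e : u.1 = v.1 := e1.trans e2.symm
  rcases h1 with ⟨hw1, hu2⟩ | ⟨hw1, hu2⟩ <;> rcases h2 with ⟨hw1', hv2⟩ | ⟨hw1', hv2⟩
  · exact Prod.ext e (hu2.trans hv2.symm)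
  · exact absurd hw1 hw1'
  · exact absurd hw1' hw1
  · exact Prod.ext e (hu2.trans hv2.symm)

lemma adj_cases {m n : ℕ} {L : ZMod n} {u v : ZMod m × ZMod n}
    (h : (cartesianBundle m n L).Adj u v) :
    v = (u.1, u.2 + 1) ∨ u = (v.1, v.2 + 1) ∨ Fwd m n L u v ∨ Fwd m n L v u := by
  rw [cartesianBundle, SimpleGraph.fromRel_adj] at h
  obtain ⟨hne, h | h⟩ := h
  · rcases h with ⟨h1, h2 | h2⟩ | h2
    · exact Or.inl (Prod.ext h1 h2)
    · refine Or.inr (Or.inl (Prod.ext h1.symm ?_))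
      rw [h2]; ring
    · exact Or.inr (Or.inr (Or.inl h2))
  · rcases h with ⟨h1, h2 | h2⟩ | h2
    · exact Or.inr (Or.inl (Prod.ext h1 h2))
    · refine Or.inl (Prod.ext h1.symm ?_)
      rw [h2]; ring
    · exact Or.inr (Or.inr (Or.inr h2))

lemma adj_of_rel {m n : ℕ} {L : ZMod n} {u v : ZMod m × ZMod n} (hne : u ≠ v)
    (h : (v.1 = u.1 ∧ (v.2 = u.2 + 1 ∨ v.2 = u.2 - 1)) ∨ Fwd m n L u v ∨ Fwd m n L v u) :
    (cartesianBundle m n L).Adj u v := by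
  rw [cartesianBundle, SimpleGraph.fromRel_adj]
  refine ⟨hne, ?_⟩
  rcases h with h | h | h
  · exact Or.inl (Or.inl h)
  · exact Or.inl (Or.inr h)
  · exact Or.inr (Or.inr h)

end Stmt18

namespace Stmt18
open SimpleGraph

variable {m n d : ℕ} {L : ZMod n}

lemma nz_zmod {q : ℕ} (t : ℕ) (h1 : 0 < t) (h2 : t < q) : ((t:ℕ) : ZMod q) ≠ 0 := by
  intro h
  rw [ZMod.natCast_eq_zero_iff] at h
  have := Nat.le_of_dvd h1 h
  omega

-- labels of two distinct common neighbors differ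
lemma labels_ne {V : Type*} {G : SimpleGraph V} {f : V → ℕ} (hf : IsLD1Labeling G d f)
    (hd : 1 ≤ d) {u w1 w2 : V} (h1 : G.Adj u w1) (h2 : G.Adj u w2) (hne : w1 ≠ w2) :
    f w1 ≠ f w2 := by
  intro heq
  by_cases hadj : G.Adj w1 w2
  · have := hf.1 _ _ hadj
    rw [heq, sub_self, abs_zero] at this
    omega
  · have hdist : G.dist w1 w2 = 2 := by
      have p : G.Walk w1 w2 := Walk.cons h1.symm (Walk.cons h2 Walk.nil)
      have hle : G.dist w1 w2 ≤ 2 := by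
        simpa using SimpleGraph.dist_le (Walk.cons h1.symm (Walk.cons h2 Walk.nil))
      have h0 : G.dist w1 w2 ≠ 0 :=
        SimpleGraph.dist_ne_zero_iff_ne_and_reachable.mpr ⟨hne, ⟨p⟩⟩
      have h1' : G.dist w1 w2 ≠ 1 := fun hh => hadj (SimpleGraph.dist_eq_one_iff_adj.mp hh)
      omega
    have := hf.2 _ _ hdist
    rw [heq, sub_self, abs_zero] at this
    omega

lemma four_neighbors (hm : 3 ≤ m) (hn : 5 ≤ n) (u : ZMod m × ZMod n) :
    ∃ w1 w2 w3 w4 : ZMod m × ZMod n,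
      w1 ≠ w2 ∧ w1 ≠ w3 ∧ w1 ≠ w4 ∧ w2 ≠ w3 ∧ w2 ≠ w4 ∧ w3 ≠ w4 ∧
      (cartesianBundle m n L).Adj u w1 ∧ (cartesianBundle m n L).Adj u w2 ∧
      (cartesianBundle m n L).Adj u w3 ∧ (cartesianBundle m n L).Adj u w4 := by
  have h1m : ((1:ℕ) : ZMod m) ≠ 0 := nz_zmod 1 (by omega) (by omega)
  have h2m : ((2:ℕ) : ZMod m) ≠ 0 := nz_zmod 2 (by omega) (by omega)
  have h1n : ((1:ℕ) : ZMod n) ≠ 0 := nz_zmod 1 (by omega) (by omega)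
  have h2n : ((2:ℕ) : ZMod n) ≠ 0 := nz_zmod 2 (by omega) (by omega)
  push_cast at h1m h2m h1n h2n
  refine ⟨(u.1, u.2 + 1), (u.1, u.2 - 1),
      (u.1 + 1, if u.1 = -1 then u.2 + L else u.2),
      (u.1 - 1, if u.1 - 1 = -1 then u.2 - L else u.2), ?_, ?_, ?_, ?_, ?_, ?_, ?_, ?_, ?_, ?_⟩
  · intro h; have := (Prod.ext_iff.mp h).2
    have : (2 : ZMod n) = 0 := by linear_combination this
    exact h2n this
  · intro h; have := (Prod.ext_iff.mp h).1
    have : (1 : ZMod m) = 0 := by linear_combination -this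
    exact h1m this
  · intro h; have := (Prod.ext_iff.mp h).1
    have : (1 : ZMod m) = 0 := by linear_combination this
    exact h1m this
  · intro h; have := (Prod.ext_iff.mp h).1
    have : (1 : ZMod m) = 0 := by linear_combination -this
    exact h1m this
  · intro h; have := (Prod.ext_iff.mp h).1
    have : (1 : ZMod m) = 0 := by linear_combination this
    exact h1m this
  · intro h; have := (Prod.ext_iff.mp h).1
    have : (2 : ZMod m) = 0 := by linear_combination this
    exact h2m this
  · refine adj_of_rel (fun h => ?_) (Or.inl ⟨rfl, Or.inl rfl⟩)
    have := (Prod.ext_iff.mp h).2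
    have : (1 : ZMod n) = 0 := by linear_combination -this
    exact h1n this
  · refine adj_of_rel (fun h => ?_) (Or.inl ⟨rfl, Or.inr rfl⟩)
    have := (Prod.ext_iff.mp h).2
    have : (1 : ZMod n) = 0 := by linear_combination this
    exact h1n this
  · refine adj_of_rel (fun h => ?_) (Or.inr (Or.inl ?_))
    · have := (Prod.ext_iff.mp h).1
      have : (1 : ZMod m) = 0 := by linear_combination -this
      exact h1m this
    · refine ⟨rfl, ?_⟩
      by_cases hc : u.1 = -1
      · exact Or.inl ⟨hc, by rw [if_pos hc]⟩
      · exact Or.inr ⟨hc, by rw [if_neg hc]⟩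
  · refine adj_of_rel (fun h => ?_) (Or.inr (Or.inr ?_))
    · have := (Prod.ext_iff.mp h).1
      have : (1 : ZMod m) = 0 := by linear_combination this
      exact h1m this
    · refine ⟨by ring, ?_⟩
      by_cases hc : u.1 - 1 = -1
      · exact Or.inl ⟨hc, by rw [if_pos hc]; ring⟩
      · exact Or.inr ⟨hc, by rw [if_neg hc]⟩

end Stmt18

namespace Stmt18

lemma lower_bound (hd1 : 1 ≤ d) (hd4 : d ≤ 4) (hm : 3 ≤ m) (hn : 5 ≤ n)
    {f : ZMod m × ZMod n → ℕ} (hf : IsLD1Labeling (cartesianBundle m n L) d f) :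
    2 * d + 2 ≤ sSup (Set.range f) - sInf (Set.range f) := by
  haveI : NeZero m := ⟨by omega⟩
  haveI : NeZero n := ⟨by omega⟩
  set M := sInf (Set.range f) with hM
  set T := sSup (Set.range f) with hT
  have hbdd : BddAbove (Set.range f) := (Set.finite_range f).bddAbove
  have hub : ∀ v, f v ≤ T := fun v => le_csSup hbdd ⟨v, rfl⟩
  have hlb : ∀ v, M ≤ f v := fun v => Nat.sInf_le ⟨v, rfl⟩
  have hne : (Set.range f).Nonempty := ⟨f (0,0), ⟨(0,0), rfl⟩⟩
  obtain ⟨v0, hv0⟩ : ∃ v, f v = M := Nat.sInf_mem hne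
  -- per-vertex package
  have key : ∀ u : ZMod m × ZMod n, ∃ w1 w2 w3 w4 : ZMod m × ZMod n,
      f w1 ≠ f w2 ∧ f w1 ≠ f w3 ∧ f w1 ≠ f w4 ∧ f w2 ≠ f w3 ∧ f w2 ≠ f w4 ∧ f w3 ≠ f w4 ∧
      (f w1 + d ≤ f u ∨ f u + d ≤ f w1) ∧ (f w2 + d ≤ f u ∨ f u + d ≤ f w2) ∧
      (f w3 + d ≤ f u ∨ f u + d ≤ f w3) ∧ (f w4 + d ≤ f u ∨ f u + d ≤ f w4) := by
    intro u
    obtain ⟨w1, w2, w3, w4, h12, h13, h14, h23, h24, h34, a1, a2, a3, a4⟩ :=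
      four_neighbors (L := L) hm hn u
    have gap : ∀ w, (cartesianBundle m n L).Adj u w → f w + d ≤ f u ∨ f u + d ≤ f w := by
      intro w hw
      have := hf.1 u w hw
      rw [le_abs] at this
      omega
    exact ⟨w1, w2, w3, w4, labels_ne hf hd1 a1 a2 h12, labels_ne hf hd1 a1 a3 h13,
      labels_ne hf hd1 a1 a4 h14, labels_ne hf hd1 a2 a3 h23, labels_ne hf hd1 a2 a4 h24,
      labels_ne hf hd1 a3 a4 h34, gap _ a1, gap _ a2, gap _ a3, gap _ a4⟩
  by_contra hcon
  push_neg at hcon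
  have hMT : M ≤ T := (hv0 ▸ hub v0 : M ≤ T)
  have hσ : T ≤ M + 2*d + 1 := by omega
  -- neighbors of v0
  obtain ⟨w1, w2, w3, w4, h12, h13, h14, h23, h24, h34, g1, g2, g3, g4⟩ := key v0
  rw [hv0] at g1 g2 g3 g4
  -- each neighbor label is ≥ M + d (from ≥ M and gap)
  -- each neighbor w of v0 has label ≥ M + d + 3
  have big : ∀ w : ZMod m × ZMod n, (f w + d ≤ M ∨ M + d ≤ f w) → M + d + 3 ≤ f w := by
    intro w hw
    obtain ⟨z1, z2, z3, z4, e12, e13, e14, e23, e24, e34, q1, q2, q3, q4⟩ := key w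
    have hz1 := hlb z1; have hz2 := hlb z2; have hz3 := hlb z3; have hz4 := hlb z4
    have hz1' := hub z1; have hz2' := hub z2; have hz3' := hub z3; have hz4' := hub z4
    have hwlb := hlb w; have hwub := hub w
    omega
  have b1 := big w1 g1
  have b2 := big w2 g2
  have b3 := big w3 g3
  have b4 := big w4 g4
  have u1 := hub w1; have u2 := hub w2; have u3 := hub w3; have u4 := hub w4
  omega

end Stmt18

namespace Stmt18
open SimpleGraph

lemma val_succ (q : ℕ) (hq : 3 ≤ q) (x : ZMod q) (hx : x ≠ -1) : (x + 1).val = x.val + 1 := by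
  haveI : NeZero q := ⟨by omega⟩
  haveI : Fact (1 < q) := ⟨by omega⟩
  have hv : x.val < q := ZMod.val_lt x
  have hne : x.val ≠ q - 1 := by
    intro h
    apply hx
    rw [← ZMod.natCast_zmod_val x, h]
    have h0 : ((q:ℕ) : ZMod q) = 0 := ZMod.natCast_self q
    push_cast [Nat.cast_sub (by omega : 1 ≤ q)]
    rw [h0]; ring
  rw [ZMod.val_add, ZMod.val_one, Nat.mod_eq_of_lt (by omega)]

lemma val_neg_one'' (q : ℕ) (hq : 3 ≤ q) : ((-1 : ZMod q)).val = q - 1 := by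
  haveI : NeZero q := ⟨by omega⟩
  have h : (-1 : ZMod q) = ((q - 1 : ℕ) : ZMod q) := by
    have h0 : ((q:ℕ) : ZMod q) = 0 := ZMod.natCast_self q
    push_cast [Nat.cast_sub (by omega : 1 ≤ q)]
    rw [h0]; ring
  rw [h, ZMod.val_cast_of_lt (by omega)]

lemma split_mod (s x y e : ℕ) (hs : 5 ≤ s) (hx : x < s) (hy : y < s) (he : 0 < e) (he2 : e < s)
    (h : (y : ZMod s) = (x : ZMod s) + (e : ℕ)) : y = x + e ∨ x + e = y + s := by
  have h' : ((y:ℕ) : ZMod s) = ((x + e : ℕ) : ZMod s) := by push_cast; exact h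
  rw [ZMod.natCast_eq_natCast_iff'] at h'
  rw [Nat.mod_eq_of_lt hy] at h'
  rcases lt_or_ge (x + e) s with hlt | hge
  · rw [Nat.mod_eq_of_lt hlt] at h'
    exact Or.inl h'
  · rw [Nat.mod_eq_sub_mod hge, Nat.mod_eq_of_lt (by omega)] at h'
    omega

end Stmt18

namespace Stmt18
open SimpleGraph

lemma construction (d m s n a : ℕ) (ℓ : ℤ)
    (hd1 : 1 ≤ d) (hm : 3 ≤ m) (hs : s = 2 * d + 3)
    (hsn : s ∣ n) (hn0 : s ≤ n)
    (ha : a = 1 ∨ a = 2)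
    (hLs : ((ℓ : ℤ) : ZMod s) = (-1) ^ a * 2 * (d : ZMod s) * (m : ZMod s)) :
    ∃ f : ZMod m × ZMod n → ℕ,
      IsLD1Labeling (cartesianBundle m n ((ℓ : ℤ) : ZMod n)) d f ∧
      sSup (Set.range f) = 2 * d + 2 ∧ sInf (Set.range f) = 0 := by
  have hs5 : 5 ≤ s := by omega
  have hn5 : 5 ≤ n := by omega
  haveI : NeZero m := ⟨by omega⟩
  haveI : NeZero n := ⟨by omega⟩
  haveI : NeZero s := ⟨by omega⟩
  have ha' : 1 ≤ a ∧ a ≤ 2 := by rcases ha with h | h <;> omega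
  set L : ZMod n := ((ℓ : ℤ) : ZMod n) with hL
  set g : ZMod m × ZMod n → ℕ := fun p => (d * p.1.val + (d + a) * p.2.val) % s with hgdef
  have hglt : ∀ p, g p < s := fun p => Nat.mod_lt _ (by omega)
  set φ : ZMod n →+* ZMod s := ZMod.castHom hsn (ZMod s) with hφ
  have hval : ∀ x : ZMod n, ((x.val : ℕ) : ZMod s) = φ x := by
    intro x
    rw [ZMod.natCast_val, hφ, ZMod.castHom_apply]
  have hg : ∀ p : ZMod m × ZMod n,
      ((g p : ℕ) : ZMod s) = (d : ZMod s) * (p.1.val : ℕ) + ((d : ZMod s) + a) * φ p.2 := by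
    intro p
    rw [hgdef]
    simp only
    rw [ZMod.natCast_mod]
    push_cast
    rw [hval]
  have hs0 : (2 * (d : ZMod s) + 3) = 0 := by
    have h0 : ((2 * d + 3 : ℕ) : ZMod s) = 0 := by rw [← hs]; exact ZMod.natCast_self s
    push_cast at h0; linear_combination h0
  -- fibre step
  have hplus : ∀ (i : ZMod m) (j : ZMod n),
      ((g (i, j + 1) : ℕ) : ZMod s) = ((g (i, j) : ℕ) : ZMod s) + ((d : ZMod s) + a) := by
    intro i j
    rw [hg, hg]
    simp only [map_add, map_one]
    ring
  -- forward base step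
  have hfwd : ∀ u v : ZMod m × ZMod n, Fwd m n L u v →
      ((g v : ℕ) : ZMod s) = ((g u : ℕ) : ZMod s) + (d : ZMod s) := by
    rintro u v ⟨h1, ⟨h2, h3⟩ | ⟨h2, h3⟩⟩
    · -- twisted edge
      have hv1 : v.1 = 0 := by rw [h1, h2]; ring
      rw [hg, hg, hv1, h2, h3, ZMod.val_zero, val_neg_one'' m hm]
      rw [map_add]
      have hφℓ : φ ((ℓ : ℤ) : ZMod n) = ((ℓ : ℤ) : ZMod s) := map_intCast φ ℓ
      rw [hφℓ, hLs]
      have hm1 : (((m - 1 : ℕ) : ℕ) : ZMod s) = (m : ZMod s) - 1 := by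
        push_cast [Nat.cast_sub (by omega : 1 ≤ m)]; ring
      rw [hm1]
      rcases ha with rfl | rfl
      · push_cast
        ring_nf
        linear_combination (-(d : ZMod s) * (m : ZMod s)) * hs0
      · push_cast
        ring_nf
        linear_combination ((d : ZMod s) * (m : ZMod s)) * hs0
    · -- plain edge
      have hv : (v.1).val = (u.1).val + 1 := by rw [h1]; exact val_succ m hm u.1 h2
      rw [hg, hg, hv, h3]
      push_cast
      ring
  -- combined step lemma
  have hstep : ∀ u v : ZMod m × ZMod n, (cartesianBundle m n L).Adj u v →
      (((g v : ℕ) : ZMod s) = ((g u : ℕ) : ZMod s) + ((d : ZMod s) + a) ∧ v = (u.1, u.2 + 1)) ∨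
      (((g u : ℕ) : ZMod s) = ((g v : ℕ) : ZMod s) + ((d : ZMod s) + a) ∧ u = (v.1, v.2 + 1)) ∨
      (((g v : ℕ) : ZMod s) = ((g u : ℕ) : ZMod s) + (d : ZMod s) ∧ Fwd m n L u v) ∨
      (((g u : ℕ) : ZMod s) = ((g v : ℕ) : ZMod s) + (d : ZMod s) ∧ Fwd m n L v u) := by
    intro u v h
    rcases adj_cases h with h | h | h | h
    · refine Or.inl ⟨?_, h⟩
      have e := hplus u.1 u.2
      rw [Prod.mk.eta] at e
      rw [h]; exact e
    · refine Or.inr (Or.inl ⟨?_, h⟩)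
      have e := hplus v.1 v.2
      rw [Prod.mk.eta] at e
      rw [h]; exact e
    · exact Or.inr (Or.inr (Or.inl ⟨hfwd u v h, h⟩))
    · exact Or.inr (Or.inr (Or.inr ⟨hfwd v u h, h⟩))
  -- condition 1
  have cond1 : ∀ u v, (cartesianBundle m n L).Adj u v →
      (d : ℤ) ≤ |((g u : ℕ) : ℤ) - ((g v : ℕ) : ℤ)| := by
    intro u v h
    have hu := hglt u; have hv := hglt v
    rcases hstep u v h with ⟨e, -⟩ | ⟨e, -⟩ | ⟨e, -⟩ | ⟨e, -⟩
    · have := split_mod s (g u) (g v) (d + a) hs5 hu hv (by omega) (by omega)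
        (by push_cast; linear_combination e)
      rw [le_abs]; omega
    · have := split_mod s (g v) (g u) (d + a) hs5 hv hu (by omega) (by omega)
        (by push_cast; linear_combination e)
      rw [le_abs]; omega
    · have := split_mod s (g u) (g v) d hs5 hu hv (by omega) (by omega)
        (by push_cast; linear_combination e)
      rw [le_abs]; omega
    · have := split_mod s (g v) (g u) d hs5 hv hu (by omega) (by omega)
        (by push_cast; linear_combination e)
      rw [le_abs]; omega
  -- nonvanishing facts
  have hB2 : 2 * (d : ZMod s) ≠ 0 := by
    intro h
    exact nz_zmod (q := s) (2 * d) (by omega) (by omega) (by push_cast; linear_combination h)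
  have hAB : 2 * (d : ZMod s) + a ≠ 0 := by
    intro h
    exact nz_zmod (q := s) (2 * d + a) (by omega) (by omega) (by push_cast; linear_combination h)
  have hA : (a : ZMod s) ≠ 0 := nz_zmod (q := s) a (by omega) (by omega)
  have hA2 : 2 * (d : ZMod s) + 2 * a ≠ 0 := by
    intro h
    rcases ha with rfl | rfl
    · exact nz_zmod (q := s) (2 * d + 2) (by omega) (by omega)
        (by push_cast; linear_combination h)
    · exact nz_zmod (q := s) 1 (by omega) (by omega)
        (by push_cast; linear_combination h - hs0)
  -- condition 2
  have cond2 : ∀ u v, (cartesianBundle m n L).dist u v = 2 →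
      (1 : ℤ) ≤ |((g u : ℕ) : ℤ) - ((g v : ℕ) : ℤ)| := by
    intro u v hdist
    obtain ⟨p, hp⟩ := SimpleGraph.exists_walk_of_dist_ne_zero (by rw [hdist]; norm_num :
      (cartesianBundle m n L).dist u v ≠ 0)
    rw [hdist] at hp
    have hne : u ≠ v :=
      (SimpleGraph.dist_ne_zero_iff_ne_and_reachable.mp (by rw [hdist]; norm_num)).1
    suffices hgne : g u ≠ g v by rw [le_abs]; omega
    intro heq
    have heqs : ((g u : ℕ) : ZMod s) = ((g v : ℕ) : ZMod s) := by rw [heq]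
    cases p with
    | nil => simp at hp
    | cons h1 q =>
      cases q with
      | nil => simp at hp
      | cons h2 q2 =>
        have hq2 : q2.length = 0 := by
          simp only [SimpleGraph.Walk.length_cons] at hp
          omega
        have := SimpleGraph.Walk.eq_of_length_eq_zero hq2
        subst this
        rcases hstep _ _ h1 with ⟨ew, sw⟩ | ⟨ew, sw⟩ | ⟨ew, sw⟩ | ⟨ew, sw⟩ <;>
          rcases hstep _ _ h2 with ⟨ev, sv⟩ | ⟨ev, sv⟩ | ⟨ev, sv⟩ | ⟨ev, sv⟩
        · exact hA2 (by linear_combination -ew - ev - heqs)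
        · refine hne (Prod.ext ?_ ?_)
          · have := (Prod.ext_iff.mp (sw.symm.trans sv)).1; exact this
          · have := (Prod.ext_iff.mp (sw.symm.trans sv)).2; exact add_right_cancel this
        · exact hAB (by linear_combination -ew - ev - heqs)
        · exact hA (by linear_combination ev - ew - heqs)
        · exact hne (sw.trans sv.symm)
        · exact hA2 (by linear_combination -ew - ev + heqs)
        · exact hA (by linear_combination ev - ew + heqs)
        · exact hAB (by linear_combination -ew - ev + heqs)
        · exact hAB (by linear_combination -ew - ev - heqs)
        · exact hA (by linear_combination ew - ev + heqs)
        · exact hB2 (by linear_combination -ew - ev - heqs)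
        · exact hne (fwd_inj sw sv)
        · exact hA (by linear_combination ew - ev - heqs)
        · exact hAB (by linear_combination -ew - ev + heqs)
        · exact hne (fwd_func sw sv)
        · exact hB2 (by linear_combination -ew - ev + heqs)
  -- span facts
  have hg00 : g (0, 0) = 0 := by
    rw [hgdef]; simp [ZMod.val_zero]
  have hattain : ∃ p : ZMod m × ZMod n, g p = 2 * d + 2 := by
    rcases ha with rfl | rfl
    · refine ⟨(0, ((2 : ℕ) : ZMod n)), ?_⟩
      rw [hgdef]
      simp only [ZMod.val_zero, mul_zero, zero_add]
      rw [ZMod.val_cast_of_lt (by omega)]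
      rw [Nat.mod_eq_of_lt (by omega)]
      ring
    · refine ⟨(0, ((2 * d + 1 : ℕ) : ZMod n)), ?_⟩
      rw [hgdef]
      simp only [ZMod.val_zero, mul_zero, zero_add]
      rw [ZMod.val_cast_of_lt (by omega)]
      have he : (d + 2) * (2 * d + 1) = (2 * d + 2) + d * s := by rw [hs]; ring
      rw [he, Nat.add_mul_mod_self_right, Nat.mod_eq_of_lt (by omega)]
  obtain ⟨p0, hp0⟩ := hattain
  have hbdd : BddAbove (Set.range g) := (Set.finite_range g).bddAbove
  refine ⟨g, ⟨cond1, cond2⟩, ?_, ?_⟩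
  · refine le_antisymm ?_ (le_csSup hbdd ⟨p0, hp0⟩)
    refine csSup_le ⟨g (0,0), ⟨(0,0), rfl⟩⟩ ?_
    rintro y ⟨p, rfl⟩
    have := hglt p
    omega
  · exact Nat.sInf_eq_zero.mpr (Or.inl ⟨(0, 0), hg00⟩)

end Stmt18


theorem stmt_18 (d m s n : ℕ) (a : ℕ) (k ℓ : ℤ) (c : ℕ)
    (hd1 : 1 ≤ d) (hd4 : d ≤ 4) (hm : 3 ≤ m) (hs : s = 2 * d + 3)
    (hc : 1 ≤ c) (hn : n = c * s)
    (ha : a = 1 ∨ a = 2)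
    (hl : ℓ = (k * (s : ℤ) + (-1) ^ a * 2 * (d : ℤ) * (m : ℤ)) % (n : ℤ)) :
    lambdaLD1 (cartesianBundle m n (ℓ : ZMod n)) d = 2 * d + 2 := by
  have hn5 : 5 ≤ n := by
    have : s ≤ c * s := Nat.le_mul_of_pos_left s (by omega)
    omega
  have hsn : s ∣ n := ⟨c, by rw [hn, mul_comm]⟩
  have hn0 : s ≤ n := Nat.le_of_dvd (by omega) hsn
  haveI : NeZero s := ⟨by omega⟩
  have hLs : ((ℓ : ℤ) : ZMod s) = (-1) ^ a * 2 * (d : ZMod s) * (m : ZMod s) := by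
    have h1 : ((n : ℕ) : ZMod s) = 0 := (ZMod.natCast_eq_zero_iff n s).mpr hsn
    have h2 : ((s : ℕ) : ZMod s) = 0 := ZMod.natCast_self s
    rw [hl, Int.emod_def]
    push_cast
    rw [h1, h2]
    ring
  obtain ⟨g, hlab, hsup, hinf⟩ :=
    Stmt18.construction d m s n a ℓ hd1 hm hs hsn hn0 ha hLs
  have hmem : 2 * d + 2 ∈ {k | ∃ f : ZMod m × ZMod n → ℕ,
      IsLD1Labeling (cartesianBundle m n ((ℓ : ℤ) : ZMod n)) d f ∧ labelSpan f = k} :=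
    ⟨g, hlab, by rw [labelSpan, hsup, hinf]; omega⟩
  refine le_antisymm (Nat.sInf_le hmem) (le_csInf ⟨_, hmem⟩ ?_)
  rintro b ⟨f, hf, rfl⟩
  exact Stmt18.lower_bound hd1 hd4 hm hn5 hf
end

section
/- Let d ≥ 1 with 1 ≤ d ≤ 4, m ≥ 3, s = 2d+3, and let n be a positive multiple of s. Suppose ℓ = (k·s − (−1)^a·(d+1)·m) mod n for some a ∈ {1,2} and integer k. Then λ_1^d(C_m ×^{σ_ℓ} C_n) = 2d+2. -/
lemma aux_bridge (s d x y D : ℤ) (hs : 0 < s) (hd : 1 ≤ d) (hx0 : 0 ≤ x) (hxs : x < s)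
    (hy0 : 0 ≤ y) (hys : y < s) (hDd : d ≤ D) (hDs : D ≤ s - d)
    (hdvd : s ∣ (x - y - D)) : d ≤ |x - y| := by
  obtain ⟨q, hq⟩ := hdvd
  have h1 : -2 < q := by
    by_contra h; push_neg at h
    have := mul_le_mul_of_nonneg_left h hs.le
    linarith
  have h2 : q < 1 := by
    by_contra h; push_neg at h
    have := mul_le_mul_of_nonneg_left h hs.le
    linarith
  rw [le_abs]
  interval_cases q <;> omega

lemma aux_not_dvd (s D : ℤ) (hs : 0 < s) (h1 : -(2*s) < D) (h2 : D < 2*s)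
    (h3 : D ≠ -s) (h4 : D ≠ 0) (h5 : D ≠ s) : ¬ s ∣ D := by
  rintro ⟨q, rfl⟩
  have ha : -2 < q := by
    by_contra h; push_neg at h
    have := mul_le_mul_of_nonneg_left h hs.le
    linarith
  have hb : q < 2 := by
    by_contra h; push_neg at h
    have := mul_le_mul_of_nonneg_left h hs.le
    linarith
  interval_cases q <;> omega

lemma aux_rel (d m s n a : ℕ) (k ℓ : ℤ) (c : ℕ)
    (hd1 : 1 ≤ d) (hm : 3 ≤ m) (hs : s = 2*d+3) (hc : 1 ≤ c) (hn : n = c * s)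
    (ha : a = 1 ∨ a = 2)
    (hl : ℓ = (k * (s:ℤ) - (-1)^a * ((d:ℤ)+1) * (m:ℤ)) % (n:ℤ))
    (u v : ZMod m × ZMod n)
    (h1 : v.1 = u.1 + 1)
    (h2 : (u.1 = -1 ∧ (v.2 = u.2 + 1 + (ℓ : ZMod n) ∨ v.2 = u.2 - 1 + (ℓ:ZMod n))) ∨
          (u.1 ≠ -1 ∧ (v.2 = u.2 + 1 ∨ v.2 = u.2 - 1))) :
    ∃ (δ : ℤ) (ε : ZMod n),
      ((δ = 1 ∧ ε = 1) ∨ (δ = -1 ∧ ε = -1)) ∧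
      ((((d:ZMod s) + (a:ZMod s)) * ((v.1.val : ℕ) : ZMod s) + ((v.2.val : ℕ) : ZMod s))
        - (((d:ZMod s) + (a:ZMod s)) * ((u.1.val : ℕ) : ZMod s) + ((u.2.val : ℕ) : ZMod s))
        = (((d:ℤ) + (a:ℤ) + δ : ℤ) : ZMod s)) ∧
      v.2 = u.2 + ε + (if u.1 = -1 then (ℓ : ZMod n) else 0) := by
  have hm0 : NeZero m := ⟨by omega⟩
  have hs5 : 5 ≤ s := by omega
  have hn5 : 5 ≤ n := by nlinarith
  have hn0 : NeZero n := ⟨by omega⟩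
  have hs0' : NeZero s := ⟨by omega⟩
  have hm1 : Fact (1 < m) := ⟨by omega⟩
  have hsn : s ∣ n := hn ▸ dvd_mul_left s c
  set φ := ZMod.castHom hsn (ZMod s) with hφ
  have hval : ∀ b : ZMod n, ((b.val : ℕ) : ZMod s) = φ b := by
    intro b; rw [ZMod.natCast_val, ZMod.castHom_apply]
  have hls : ((ℓ:ℤ) : ZMod s) = ((-(-1:ℤ)^a * ((d:ℤ)+1) * (m:ℤ) : ℤ) : ZMod s) := by
    rw [ZMod.intCast_eq_intCast_iff]
    have h' : ℓ % (s:ℤ) = (k * (s:ℤ) - (-1)^a * ((d:ℤ)+1) * (m:ℤ)) % (s:ℤ) := by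
      rw [hl]; exact Int.emod_emod_of_dvd _ (Int.natCast_dvd_natCast.mpr hsn)
    exact Int.ModEq.trans h' (Int.modEq_iff_dvd.mpr ⟨-k, by ring⟩)
  have hφl : φ ((ℓ:ℤ) : ZMod n) = ((ℓ:ℤ) : ZMod s) := map_intCast φ ℓ
  have hsz : (2:ZMod s)*(d:ZMod s)+3 = 0 := by
    have h0 : ((2*d+3 : ℕ) : ZMod s) = 0 := by rw [← hs]; exact ZMod.natCast_self s
    push_cast at h0; exact h0
  rcases h2 with ⟨hw, hv2⟩ | ⟨hw, hv2⟩
  · -- wrap case : u.1 = -1, v.1 = 0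
    have hu1 : ((u.1.val : ℕ) : ZMod s) = (m : ZMod s) - 1 := by
      obtain ⟨m', rfl⟩ : ∃ m', m = m' + 1 := ⟨m - 1, by omega⟩
      rw [hw, ZMod.val_neg_one]
      push_cast; ring
    have hv1 : ((v.1.val : ℕ) : ZMod s) = 0 := by
      rw [h1, hw]; norm_num
    rcases hv2 with hv2 | hv2
    · refine ⟨1, 1, Or.inl ⟨rfl, rfl⟩, ?_, ?_⟩
      · rw [hu1, hv1, hval, hval, hv2]
        simp only [map_add, map_sub, map_neg, map_one, hφl, hls]
        rcases ha with rfl | rfl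
        · push_cast; ring
        · push_cast; linear_combination (-(m:ZMod s)) * hsz
      · rw [if_pos hw]; rw [hv2]
    · refine ⟨-1, -1, Or.inr ⟨rfl, rfl⟩, ?_, ?_⟩
      · rw [hu1, hv1, hval, hval, hv2]
        simp only [map_add, map_sub, map_neg, map_one, hφl, hls]
        rcases ha with rfl | rfl
        · push_cast; ring
        · push_cast; linear_combination (-(m:ZMod s)) * hsz
      · rw [if_pos hw, hv2]; ring
  · -- non-wrap case
    have huval : u.1.val ≠ m - 1 := by
      intro hc'
      apply hw
      apply ZMod.val_injective
      rw [hc']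
      obtain ⟨m', rfl⟩ : ∃ m', m = m' + 1 := ⟨m - 1, by omega⟩
      rw [ZMod.val_neg_one]; omega
    have hvv : v.1.val = u.1.val + 1 := by
      rw [h1]
      have h1v : (1 : ZMod m).val = 1 := ZMod.val_one m
      rw [ZMod.val_add_of_lt (by rw [h1v]; have := ZMod.val_lt u.1; omega), h1v]
    rcases hv2 with hv2 | hv2
    · refine ⟨1, 1, Or.inl ⟨rfl, rfl⟩, ?_, ?_⟩
      · rw [hvv, hval, hval, hv2]
        simp only [map_add, map_sub, map_neg, map_one, hφl, hls]
        push_cast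
        ring
      · rw [if_neg hw, hv2]; ring
    · refine ⟨-1, -1, Or.inr ⟨rfl, rfl⟩, ?_, ?_⟩
      · rw [hvv, hval, hval, hv2]
        simp only [map_add, map_sub, map_neg, map_one, hφl, hls]
        push_cast
        ring
      · rw [if_neg hw, hv2]; ring

lemma aux_two_ne (q : ℕ) (h : 3 ≤ q) : (2 : ZMod q) ≠ 0 := by
  have : NeZero q := ⟨by omega⟩
  intro hc
  have h2 : ((2:ℕ) : ZMod q) = 0 := by exact_mod_cast hc
  rw [ZMod.natCast_eq_zero_iff] at h2
  have := Nat.le_of_dvd (by norm_num) h2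
  omega

lemma aux_nbhd (m n : ℕ) (ℓz : ZMod n) (hm : 3 ≤ m) (hn : 5 ≤ n)
    (v : ZMod m × ZMod n) :
    ∃ w1 w2 w3 w4 : ZMod m × ZMod n,
      (directBundle m n ℓz).Adj v w1 ∧ (directBundle m n ℓz).Adj v w2 ∧
      (directBundle m n ℓz).Adj v w3 ∧ (directBundle m n ℓz).Adj v w4 ∧
      w1 ≠ w2 ∧ w1 ≠ w3 ∧ w1 ≠ w4 ∧ w2 ≠ w3 ∧ w2 ≠ w4 ∧ w3 ≠ w4 := by
  have hm2 : (2 : ZMod m) ≠ 0 := aux_two_ne m hm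
  have hn2 : (2 : ZMod n) ≠ 0 := aux_two_ne n (by omega)
  have hm1 : (1 : ZMod m) ≠ 0 := by
    intro hc
    apply hm2
    rw [show (2 : ZMod m) = 1 + 1 by ring, hc]; ring
  set e1 : ZMod n := if v.1 = -1 then ℓz else 0 with he1
  set e2 : ZMod n := if v.1 - 1 = -1 then ℓz else 0 with he2
  refine ⟨(v.1 + 1, v.2 + 1 + e1), (v.1 + 1, v.2 - 1 + e1),
          (v.1 - 1, v.2 - 1 - e2), (v.1 - 1, v.2 + 1 - e2), ?_, ?_, ?_, ?_, ?_, ?_, ?_, ?_, ?_, ?_⟩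
  · rw [directBundle, SimpleGraph.fromRel_adj]
    refine ⟨?_, Or.inl ⟨rfl, ?_⟩⟩
    · intro hc
      have := congrArg Prod.fst hc
      simp only at this
      exact hm1 (by linear_combination -this)
    · by_cases hv : v.1 = -1
      · exact Or.inl ⟨hv, Or.inl (show v.2+1+e1 = v.2+1+ℓz by rw [he1, if_pos hv])⟩
      · exact Or.inr ⟨hv, Or.inl (show v.2+1+e1 = v.2+1 by rw [he1, if_neg hv, add_zero])⟩
  · rw [directBundle, SimpleGraph.fromRel_adj]
    refine ⟨?_, Or.inl ⟨rfl, ?_⟩⟩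
    · intro hc
      have := congrArg Prod.fst hc
      simp only at this
      exact hm1 (by linear_combination -this)
    · by_cases hv : v.1 = -1
      · exact Or.inl ⟨hv, Or.inr (show v.2-1+e1 = v.2-1+ℓz by rw [he1, if_pos hv])⟩
      · exact Or.inr ⟨hv, Or.inr (show v.2-1+e1 = v.2-1 by rw [he1, if_neg hv, add_zero])⟩
  · rw [directBundle, SimpleGraph.fromRel_adj]
    refine ⟨?_, Or.inr ⟨by ring, ?_⟩⟩
    · intro hc
      have := congrArg Prod.fst hc
      simp only at this
      exact hm1 (by linear_combination this)
    · by_cases hv : v.1 - 1 = -1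
      · exact Or.inl ⟨hv, Or.inl (show v.2 = v.2-1-e2+1+ℓz by rw [he2, if_pos hv]; ring)⟩
      · exact Or.inr ⟨hv, Or.inl (show v.2 = v.2-1-e2+1 by rw [he2, if_neg hv]; ring)⟩
  · rw [directBundle, SimpleGraph.fromRel_adj]
    refine ⟨?_, Or.inr ⟨by ring, ?_⟩⟩
    · intro hc
      have := congrArg Prod.fst hc
      simp only at this
      exact hm1 (by linear_combination this)
    · by_cases hv : v.1 - 1 = -1
      · exact Or.inl ⟨hv, Or.inr (show v.2 = v.2+1-e2-1+ℓz by rw [he2, if_pos hv]; ring)⟩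
      · exact Or.inr ⟨hv, Or.inr (show v.2 = v.2+1-e2-1 by rw [he2, if_neg hv]; ring)⟩
  · intro hc
    have := congrArg Prod.snd hc
    simp only at this
    exact hn2 (by linear_combination this)
  · intro hc
    have := congrArg Prod.fst hc
    simp only at this
    exact hm2 (by linear_combination this)
  · intro hc
    have := congrArg Prod.fst hc
    simp only at this
    exact hm2 (by linear_combination this)
  · intro hc
    have := congrArg Prod.fst hc
    simp only at this
    exact hm2 (by linear_combination this)
  · intro hc
    have := congrArg Prod.fst hc
    simp only at this
    exact hm2 (by linear_combination this)
  · intro hc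
    have := congrArg Prod.snd hc
    simp only at this
    exact hn2 (by linear_combination -this)

theorem stmt_19 (d m s n : ℕ) (a : ℕ) (k ℓ : ℤ) (c : ℕ)
    (hd1 : 1 ≤ d) (hd4 : d ≤ 4) (hm : 3 ≤ m) (hs : s = 2 * d + 3)
    (hc : 1 ≤ c) (hn : n = c * s)
    (ha : a = 1 ∨ a = 2)
    (hl : ℓ = (k * (s : ℤ) - (-1) ^ a * ((d : ℤ) + 1) * (m : ℤ)) % (n : ℤ)) :
    lambdaLD1 (directBundle m n (ℓ : ZMod n)) d = 2 * d + 2 := by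
  have hm0 : NeZero m := ⟨by omega⟩
  have hs5 : 5 ≤ s := by omega
  have hn5 : 5 ≤ n := by nlinarith
  have hns : s ≤ n := by nlinarith
  have hn0 : NeZero n := ⟨by omega⟩
  have hs0 : NeZero s := ⟨by omega⟩
  have ha12 : 1 ≤ a ∧ a ≤ 2 := by rcases ha with rfl | rfl <;> omega
  set G := directBundle m n ((ℓ : ℤ) : ZMod n) with hG
  set f : ZMod m × ZMod n → ℕ := fun v => ((d + a) * v.1.val + v.2.val) % s with hf
  have hfv : ∀ v, f v = ((d + a) * v.1.val + v.2.val) % s := fun v => rfl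
  have hfs : ∀ v, f v < s := fun v => Nat.mod_lt _ (by omega)
  have hcast : ∀ v : ZMod m × ZMod n, ((f v : ℕ) : ZMod s)
      = ((d:ZMod s)+(a:ZMod s)) * ((v.1.val:ℕ) : ZMod s) + ((v.2.val:ℕ):ZMod s) := by
    intro v
    rw [hfv, ZMod.natCast_mod]
    push_cast
    ring
  have hrel := fun (u v : ZMod m × ZMod n) h1 h2 =>
    aux_rel d m s n a k ℓ c hd1 hm (by omega) hc hn ha hl u v h1 h2
  -- condition 1
  have cond1 : ∀ u v, G.Adj u v → (d : ℤ) ≤ |(f u : ℤ) - (f v : ℤ)| := by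
    have main : ∀ x y : ZMod m × ZMod n,
        (y.1 = x.1 + 1 ∧
          ((x.1 = -1 ∧ (y.2 = x.2 + 1 + ((ℓ:ℤ) : ZMod n) ∨ y.2 = x.2 - 1 + ((ℓ:ℤ):ZMod n))) ∨
           (x.1 ≠ -1 ∧ (y.2 = x.2 + 1 ∨ y.2 = x.2 - 1)))) →
        (d : ℤ) ≤ |(f y : ℤ) - (f x : ℤ)| := by
      intro x y hxy
      obtain ⟨δ, ε, hδ, hF, -⟩ := hrel x y hxy.1 hxy.2
      have hδ1 : δ = 1 ∨ δ = -1 := by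
        rcases hδ with ⟨h', -⟩ | ⟨h', -⟩
        · exact Or.inl h'
        · exact Or.inr h'
      have hδb : -1 ≤ δ ∧ δ ≤ 1 := by rcases hδ1 with rfl | rfl <;> norm_num
      have h0 : (((f y : ℤ) - (f x : ℤ) - ((d:ℤ)+(a:ℤ)+δ) : ℤ) : ZMod s) = 0 := by
        push_cast
        rw [hcast, hcast]
        push_cast at hF
        linear_combination hF
      have hdvd := (ZMod.intCast_zmod_eq_zero_iff_dvd _ s).mp h0
      exact aux_bridge (s:ℤ) (d:ℤ) (f y : ℤ) (f x : ℤ) ((d:ℤ)+(a:ℤ)+δ)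
        (by omega) (by omega) (by positivity) (by exact_mod_cast hfs y)
        (by positivity) (by exact_mod_cast hfs x) (by omega) (by omega) hdvd
    intro u v hadj
    rw [hG, directBundle, SimpleGraph.fromRel_adj] at hadj
    obtain ⟨hne, hor | hor⟩ := hadj
    · rw [abs_sub_comm]
      exact main u v hor
    · exact main v u hor
  -- condition 2
  have cond2 : ∀ u v, G.dist u v = 2 → (1 : ℤ) ≤ |(f u : ℤ) - (f v : ℤ)| := by
    intro u v hdist
    have hneuv : u ≠ v := by
      intro h; rw [h, SimpleGraph.dist_self] at hdist; omega
    have hreach : G.Reachable u v := by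
      by_contra hr
      have := SimpleGraph.dist_eq_zero_iff_eq_or_not_reachable.mpr (Or.inr hr)
      omega
    obtain ⟨p, hp⟩ := hreach.exists_walk_length_eq_dist
    rw [hdist] at hp
    suffices hfne : f u ≠ f v by
      have hne' : (f u : ℤ) ≠ (f v : ℤ) := by exact_mod_cast hfne
      exact Int.one_le_abs (sub_ne_zero.mpr hne')
    cases p with
    | nil => simp at hp
    | @cons _ w _ h q =>
      cases q with
      | nil => simp at hp
      | @cons _ x _ h' q' =>
        have hq0 : q'.length = 0 := by
          simp only [SimpleGraph.Walk.length_cons] at hp; omega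
        have hxv := SimpleGraph.Walk.eq_of_length_eq_zero hq0
        rw [hxv] at h'
        rw [hG, directBundle, SimpleGraph.fromRel_adj] at h h'
        obtain ⟨-, h⟩ := h
        obtain ⟨-, h'⟩ := h'
        intro heq
        have hceq : ((f u : ℕ) : ZMod s) = ((f v : ℕ) : ZMod s) := by rw [heq]
        rw [hcast, hcast] at hceq
        have hnd : ∀ D : ℤ, ((D : ℤ) : ZMod s) = 0 → -(2*(s:ℤ)) < D → D < 2*(s:ℤ) →
            D ≠ -(s:ℤ) → D ≠ 0 → D ≠ (s:ℤ) → False := by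
          intro D h0 hb1 hb2 hb3 hb4 hb5
          exact aux_not_dvd _ _ (by omega) hb1 hb2 hb3 hb4 hb5
            ((ZMod.intCast_zmod_eq_zero_iff_dvd _ s).mp h0)
        rcases h with h | h <;> rcases h' with h' | h'
        · -- rel u w, rel w v
          obtain ⟨δ1, ε1, hδ1, hF1, -⟩ := hrel u w h.1 h.2
          obtain ⟨δ2, ε2, hδ2, hF2, -⟩ := hrel w v h'.1 h'.2
          have e1 : δ1 = 1 ∨ δ1 = -1 := by
            rcases hδ1 with ⟨h1, -⟩ | ⟨h1, -⟩; exacts [Or.inl h1, Or.inr h1]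
          have e2 : δ2 = 1 ∨ δ2 = -1 := by
            rcases hδ2 with ⟨h2, -⟩ | ⟨h2, -⟩; exacts [Or.inl h2, Or.inr h2]
          refine hnd (((d:ℤ)+(a:ℤ)+δ1) + ((d:ℤ)+(a:ℤ)+δ2)) ?_ ?_ ?_ ?_ ?_ ?_
          · push_cast at hF1 hF2 ⊢
            linear_combination - hF1 - hF2 - hceq
          all_goals rcases e1 with h1 | h1 <;> rcases e2 with h2 | h2 <;> omega
        · -- rel u w, rel v w
          obtain ⟨δ1, ε1, hδ1, hF1, hw1⟩ := hrel u w h.1 h.2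
          obtain ⟨δ2, ε2, hδ2, hF2, hw2⟩ := hrel v w h'.1 h'.2
          have h1eq : u.1 = v.1 := by
            have hh := h.1.symm.trans h'.1
            exact add_right_cancel hh
          rcases hδ1 with ⟨h1x, h1e⟩ | ⟨h1x, h1e⟩ <;> rcases hδ2 with ⟨h2x, h2e⟩ | ⟨h2x, h2e⟩
          · refine hneuv (Prod.ext h1eq ?_)
            have hh := hw1.symm.trans hw2
            rw [h1eq, h1e, h2e] at hh
            exact add_right_cancel (add_right_cancel hh)
          · refine hnd (δ1 - δ2) ?_ ?_ ?_ ?_ ?_ ?_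
            · push_cast at hF1 hF2 ⊢
              linear_combination - hF1 + hF2 - hceq
            all_goals omega
          · refine hnd (δ1 - δ2) ?_ ?_ ?_ ?_ ?_ ?_
            · push_cast at hF1 hF2 ⊢
              linear_combination - hF1 + hF2 - hceq
            all_goals omega
          · refine hneuv (Prod.ext h1eq ?_)
            have hh := hw1.symm.trans hw2
            rw [h1eq, h1e, h2e] at hh
            exact add_right_cancel (add_right_cancel hh)
        · -- rel w u, rel w v
          obtain ⟨δ1, ε1, hδ1, hF1, hw1⟩ := hrel w u h.1 h.2
          obtain ⟨δ2, ε2, hδ2, hF2, hw2⟩ := hrel w v h'.1 h'.2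
          have h1eq : u.1 = v.1 := by rw [h.1, h'.1]
          rcases hδ1 with ⟨h1x, h1e⟩ | ⟨h1x, h1e⟩ <;> rcases hδ2 with ⟨h2x, h2e⟩ | ⟨h2x, h2e⟩
          · refine hneuv (Prod.ext h1eq ?_)
            rw [hw1, hw2, h1e, h2e]
          · refine hnd (δ2 - δ1) ?_ ?_ ?_ ?_ ?_ ?_
            · push_cast at hF1 hF2 ⊢
              linear_combination hF1 - hF2 - hceq
            all_goals omega
          · refine hnd (δ2 - δ1) ?_ ?_ ?_ ?_ ?_ ?_
            · push_cast at hF1 hF2 ⊢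
              linear_combination hF1 - hF2 - hceq
            all_goals omega
          · refine hneuv (Prod.ext h1eq ?_)
            rw [hw1, hw2, h1e, h2e]
        · -- rel w u, rel v w
          obtain ⟨δ1, ε1, hδ1, hF1, -⟩ := hrel w u h.1 h.2
          obtain ⟨δ2, ε2, hδ2, hF2, -⟩ := hrel v w h'.1 h'.2
          have e1 : δ1 = 1 ∨ δ1 = -1 := by
            rcases hδ1 with ⟨h1, -⟩ | ⟨h1, -⟩; exacts [Or.inl h1, Or.inr h1]
          have e2 : δ2 = 1 ∨ δ2 = -1 := by
            rcases hδ2 with ⟨h2, -⟩ | ⟨h2, -⟩; exacts [Or.inl h2, Or.inr h2]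
          refine hnd (-((d:ℤ)+(a:ℤ)+δ1) - ((d:ℤ)+(a:ℤ)+δ2)) ?_ ?_ ?_ ?_ ?_ ?_
          · push_cast at hF1 hF2 ⊢
            linear_combination hF1 + hF2 - hceq
          all_goals rcases e1 with h1 | h1 <;> rcases e2 with h2 | h2 <;> omega
  have hlab : IsLD1Labeling G d f := ⟨cond1, cond2⟩
  -- span of f
  have h00 : f ((0:ZMod m), (0:ZMod n)) = 0 := by
    rw [hfv]
    simp [ZMod.val_zero]
  have hmax : f ((0:ZMod m), ((2*d+2 : ℕ) : ZMod n)) = 2*d+2 := by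
    rw [hfv]
    simp only [ZMod.val_zero, ZMod.val_cast_of_lt (show 2*d+2 < n by omega)]
    rw [mul_zero, zero_add, Nat.mod_eq_of_lt (by omega)]
  have hspanf : labelSpan f = 2*d+2 := by
    rw [labelSpan]
    have hnem : (Set.range f).Nonempty := ⟨f ((0:ZMod m),(0:ZMod n)), ⟨_, rfl⟩⟩
    have hub : ∀ b ∈ Set.range f, b ≤ 2*d+2 := by
      rintro b ⟨v, rfl⟩; have := hfs v; omega
    have hbdd : BddAbove (Set.range f) := ⟨2*d+2, hub⟩
    have h1 : sSup (Set.range f) = 2*d+2 :=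
      le_antisymm (csSup_le hnem hub) (le_csSup hbdd ⟨_, hmax⟩)
    have h2 : sInf (Set.range f) = 0 := Nat.sInf_eq_zero.mpr (Or.inl ⟨_, h00⟩)
    rw [h1, h2]
    omega
  have hmem : 2*d+2 ∈ {k | ∃ f', IsLD1Labeling G d f' ∧ labelSpan f' = k} := ⟨f, hlab, hspanf⟩
  -- lower bound
  have lower : ∀ g : ZMod m × ZMod n → ℕ, IsLD1Labeling G d g → 2*d+2 ≤ labelSpan g := by
    intro g hg
    by_contra hcon
    push_neg at hcon
    rw [labelSpan] at hcon
    set μ := sInf (Set.range g) with hμ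
    set M := sSup (Set.range g) with hM
    have hbdd : BddAbove (Set.range g) := (Set.finite_range g).bddAbove
    have hub : ∀ v, g v ≤ M := fun v => le_csSup hbdd ⟨v, rfl⟩
    have hlb : ∀ v, μ ≤ g v := fun v => Nat.sInf_le ⟨v, rfl⟩
    have hMμ : M ≤ μ + (2*d+1) := by
      have h1 := hlb ((0:ZMod m), (0:ZMod n))
      have h2 := hub ((0:ZMod m), (0:ZMod n))
      omega
    have hlabdiff : ∀ x w w' : ZMod m × ZMod n,
        G.Adj x w → G.Adj x w' → w ≠ w' → g w ≠ g w' := by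
      intro x w w' hA hA' hne heq
      by_cases hww : G.Adj w w'
      · have := hg.1 w w' hww
        rw [heq, sub_self, abs_zero] at this
        omega
      · have hdist : G.dist w w' = 2 := by
          have hle : G.dist w w' ≤ 2 := by
            have := SimpleGraph.dist_le (SimpleGraph.Walk.cons hA.symm
              (SimpleGraph.Walk.cons hA' SimpleGraph.Walk.nil))
            simpa using this
          have hne0 : G.dist w w' ≠ 0 := by
            intro h0
            rcases SimpleGraph.dist_eq_zero_iff_eq_or_not_reachable.mp h0 with h | h
            · exact hne h
            · exact h ⟨SimpleGraph.Walk.cons hA.symm (SimpleGraph.Walk.cons hA' SimpleGraph.Walk.nil)⟩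
          have hne1 : G.dist w w' ≠ 1 := by
            intro h1
            exact hww (SimpleGraph.dist_eq_one_iff_adj.mp h1)
          omega
        have := hg.2 w w' hdist
        rw [heq, sub_self, abs_zero] at this
        omega
    have hstep : ∀ x w : ZMod m × ZMod n, G.Adj x w → (g x + d ≤ g w ∨ g w + d ≤ g x) := by
      intro x w hA
      have := hg.1 x w hA
      rw [le_abs] at this
      rcases this with h | h
      · right; omega
      · left; omega
    have stage1 : ∀ v : ZMod m × ZMod n, g v + 2 ≤ μ + d ∨ μ + d + 3 ≤ g v := by
      intro v
      obtain ⟨w1, w2, w3, w4, a1, a2, a3, a4, n12, n13, n14, n23, n24, n34⟩ :=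
        aux_nbhd m n ((ℓ:ℤ) : ZMod n) hm (by omega) v
      rw [← hG] at a1 a2 a3 a4
      have d12 := hlabdiff v w1 w2 a1 a2 n12
      have d13 := hlabdiff v w1 w3 a1 a3 n13
      have d14 := hlabdiff v w1 w4 a1 a4 n14
      have d23 := hlabdiff v w2 w3 a2 a3 n23
      have d24 := hlabdiff v w2 w4 a2 a4 n24
      have d34 := hlabdiff v w3 w4 a3 a4 n34
      have s1 := hstep v w1 a1
      have s2 := hstep v w2 a2
      have s3 := hstep v w3 a3
      have s4 := hstep v w4 a4
      have b0 := hlb v; have b0' := hub v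
      have b1 := hlb w1; have b1' := hub w1
      have b2 := hlb w2; have b2' := hub w2
      have b3 := hlb w3; have b3' := hub w3
      have b4 := hlb w4; have b4' := hub w4
      rcases s1 with s1 | s1 <;> rcases s2 with s2 | s2 <;>
        rcases s3 with s3 | s3 <;> rcases s4 with s4 | s4 <;> omega
    obtain ⟨w1, w2, w3, w4, a1, a2, a3, a4, n12, n13, n14, n23, n24, n34⟩ :=
      aux_nbhd m n ((ℓ:ℤ) : ZMod n) hm (by omega) ((0:ZMod m), (0:ZMod n))
    rw [← hG] at a1 a2 a3 a4
    set v0 : ZMod m × ZMod n := ((0:ZMod m), (0:ZMod n)) with hv0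
    have d12 := hlabdiff v0 w1 w2 a1 a2 n12
    have d13 := hlabdiff v0 w1 w3 a1 a3 n13
    have d14 := hlabdiff v0 w1 w4 a1 a4 n14
    have d23 := hlabdiff v0 w2 w3 a2 a3 n23
    have d24 := hlabdiff v0 w2 w4 a2 a4 n24
    have d34 := hlabdiff v0 w3 w4 a3 a4 n34
    have s1 := hstep v0 w1 a1
    have s2 := hstep v0 w2 a2
    have s3 := hstep v0 w3 a3
    have s4 := hstep v0 w4 a4
    have t0 := stage1 v0
    have t1 := stage1 w1
    have t2 := stage1 w2
    have t3 := stage1 w3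
    have t4 := stage1 w4
    have b0 := hlb v0; have b0' := hub v0
    have b1 := hlb w1; have b1' := hub w1
    have b2 := hlb w2; have b2' := hub w2
    have b3 := hlb w3; have b3' := hub w3
    have b4 := hlb w4; have b4' := hub w4
    rcases t0 with t0 | t0
    · have e1 : μ + d + 3 ≤ g w1 := by rcases s1 with h | h <;> rcases t1 with h' | h' <;> omega
      have e2 : μ + d + 3 ≤ g w2 := by rcases s2 with h | h <;> rcases t2 with h' | h' <;> omega
      have e3 : μ + d + 3 ≤ g w3 := by rcases s3 with h | h <;> rcases t3 with h' | h' <;> omega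
      have e4 : μ + d + 3 ≤ g w4 := by rcases s4 with h | h <;> rcases t4 with h' | h' <;> omega
      omega
    · have e1 : g w1 + 2 ≤ μ + d := by rcases s1 with h | h <;> rcases t1 with h' | h' <;> omega
      have e2 : g w2 + 2 ≤ μ + d := by rcases s2 with h | h <;> rcases t2 with h' | h' <;> omega
      have e3 : g w3 + 2 ≤ μ + d := by rcases s3 with h | h <;> rcases t3 with h' | h' <;> omega
      have e4 : g w4 + 2 ≤ μ + d := by rcases s4 with h | h <;> rcases t4 with h' | h' <;> omega
      omega
  -- conclude
  rw [lambdaLD1]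
  refine le_antisymm (Nat.sInf_le hmem) ?_
  have hnem : {k | ∃ f', IsLD1Labeling G d f' ∧ labelSpan f' = k}.Nonempty := ⟨_, hmem⟩
  obtain ⟨g, hg, hgs⟩ := Nat.sInf_mem hnem
  rw [← hgs]
  exact lower g hg
end
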